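/- arXiv:2205.11217 — 12 statements merged into one kernel-verified Lean document; each statement's English description precedes it below -/
import Mathlib

section
/- Let a, b, c be relatively prime positive integers all greater than 1, and let d > 2 be a positive divisor of c. If (x, y, z) is a solution in positive integers to a^x + b^y = c^z, then e_d(a) divides e_d(b)·x and e_d(b) divides e_d(a)·y. -/
lemma pm_pow {R : Type*} [Monoid R] [HasDistribNeg R] {ε : R} (h : ε = 1 ∨ ε = -1)
    (n : ℕ) : ε ^ n = 1 ∨ ε ^ n = -1 := by
  rcases h with h | h <;> subst h
  · left; simp
  · rcases Nat.even_or_odd n with he | ho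
    · left; exact he.neg_one_pow
    · right; exact ho.neg_one_pow

lemma pm_mul {R : Type*} [Monoid R] [HasDistribNeg R] {u v : R}
    (hu : u = 1 ∨ u = -1) (hv : v = 1 ∨ v = -1) : u * v = 1 ∨ u * v = -1 := by
  rcases hu with h | h <;> rcases hv with h' | h' <;> subst h <;> subst h' <;> simp

lemma pm_key {d : ℕ} (A : ZMod d) (E : ℕ)
    (hE : IsLeast {n : ℕ | 0 < n ∧ (A ^ n = 1 ∨ A ^ n = -1)} E)
    (m : ℕ) (hm : A ^ m = 1 ∨ A ^ m = -1) : E ∣ m := by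
  obtain ⟨⟨hEpos, hEval⟩, hmin⟩ := hE
  rcases Nat.eq_zero_or_pos m with rfl | hmpos
  · exact dvd_zero E
  have hdiv : E * (m / E) + m % E = m := Nat.div_add_mod m E
  set r := m % E with hr
  set q := m / E with hq
  have hrlt : r < E := Nat.mod_lt _ hEpos
  have hAm : A ^ m = (A ^ E) ^ q * A ^ r := by
    rw [← pow_mul, ← pow_add, hdiv]
  have hq1 : (A ^ E) ^ q = 1 ∨ (A ^ E) ^ q = -1 := pm_pow hEval q
  have hsq : (A ^ E) ^ q * (A ^ E) ^ q = 1 := by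
    rcases hq1 with h | h <;> rw [h] <;> ring
  have hr1 : A ^ r = 1 ∨ A ^ r = -1 := by
    have h2 : (A ^ E) ^ q * A ^ m = A ^ r := by
      rw [hAm, ← mul_assoc, hsq, one_mul]
    rw [← h2]
    exact pm_mul hq1 hm
  rcases Nat.eq_zero_or_pos r with h0 | hrpos
  · exact Nat.dvd_of_mod_eq_zero h0
  · exact absurd (hmin ⟨hrpos, hr1⟩) (by omega)

lemma pm_transfer {a d : ℕ} (E : ℕ)
    (hE : IsLeast {n : ℕ | 0 < n ∧
      ((a : ℤ) ^ n ≡ 1 [ZMOD (d : ℤ)] ∨ (a : ℤ) ^ n ≡ -1 [ZMOD (d : ℤ)])} E) :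
    IsLeast {n : ℕ | 0 < n ∧
      ((a : ZMod d) ^ n = 1 ∨ (a : ZMod d) ^ n = -1)} E := by
  have hiff : ∀ n : ℕ,
      (((a : ℤ) ^ n ≡ 1 [ZMOD (d : ℤ)] ∨ (a : ℤ) ^ n ≡ -1 [ZMOD (d : ℤ)]) ↔
        ((a : ZMod d) ^ n = 1 ∨ (a : ZMod d) ^ n = -1)) := by
    intro n
    rw [← ZMod.intCast_eq_intCast_iff, ← ZMod.intCast_eq_intCast_iff]
    push_cast
    rfl
  exact ⟨⟨hE.1.1, (hiff E).mp hE.1.2⟩, fun n hn => hE.2 ⟨hn.1, (hiff n).mpr hn.2⟩⟩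

theorem stmt_4 (a b c d : ℕ) (ha : 1 < a) (hb : 1 < b) (hc : 1 < c)
    (hab : Nat.Coprime a b) (hac : Nat.Coprime a c) (hbc : Nat.Coprime b c)
    (hd : d ∣ c) (hd2 : 2 < d) (Ea Eb : ℕ)
    (hEa : IsLeast {n : ℕ | 0 < n ∧
      ((a : ℤ) ^ n ≡ 1 [ZMOD (d : ℤ)] ∨ (a : ℤ) ^ n ≡ -1 [ZMOD (d : ℤ)])} Ea)
    (hEb : IsLeast {n : ℕ | 0 < n ∧
      ((b : ℤ) ^ n ≡ 1 [ZMOD (d : ℤ)] ∨ (b : ℤ) ^ n ≡ -1 [ZMOD (d : ℤ)])} Eb)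
    (x y z : ℕ) (hx : 0 < x) (hy : 0 < y) (hz : 0 < z)
    (heq : a ^ x + b ^ y = c ^ z) :
    Ea ∣ Eb * x ∧ Eb ∣ Ea * y := by
  have hEa' := pm_transfer Ea hEa
  have hEb' := pm_transfer Eb hEb
  set A : ZMod d := (a : ZMod d) with hA
  set B : ZMod d := (b : ZMod d) with hB
  have hc0 : (c : ZMod d) = 0 := (ZMod.natCast_eq_zero_iff c d).mpr hd
  have hsum : A ^ x + B ^ y = 0 := by
    have h1 : ((a ^ x + b ^ y : ℕ) : ZMod d) = ((c ^ z : ℕ) : ZMod d) := by rw [heq]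
    push_cast at h1
    rw [hc0, zero_pow hz.ne'] at h1
    exact h1
  have hABx : A ^ x = -(B ^ y) := by linear_combination hsum
  have hBAy : B ^ y = -(A ^ x) := by linear_combination hsum
  constructor
  · apply pm_key A Ea hEa' (Eb * x)
    have : A ^ (Eb * x) = (-1 : ZMod d) ^ Eb * (B ^ Eb) ^ y := by
      rw [mul_comm, pow_mul, hABx, neg_pow, ← pow_mul, mul_comm y Eb, pow_mul]
    rw [this]
    exact pm_mul (pm_pow (Or.inr rfl) Eb) (pm_pow hEb'.1.2 y)
  · apply pm_key B Eb hEb' (Ea * y)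
    have : B ^ (Ea * y) = (-1 : ZMod d) ^ Ea * (A ^ Ea) ^ x := by
      rw [mul_comm, pow_mul, hBAy, neg_pow, ← pow_mul, mul_comm x Ea, pow_mul]
    rw [this]
    exact pm_mul (pm_pow (Or.inr rfl) Ea) (pm_pow hEa'.1.2 x)
end

section
/- Let a, b, c be pairwise coprime integers greater than 1, each of a and b congruent to ±1 modulo every prime factor of c. If (x,y,z) is a positive-integer solution of a^x + b^y = c^z (with z ≥ 2 when c = 2, and a ≡ ±1, b ≡ ±1 mod 4 when c is even), then gcd(x, y) = 1. -/
open Finset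

private lemma aux_two_pow (n : ℕ) : n + 4 ≤ 2 ^ (n + 2) := by
  induction n with
  | zero => norm_num
  | succ k ih =>
    have h : 2 ^ (k + 1 + 2) = 2 * 2 ^ (k + 2) := by ring
    omega

private lemma signAux_pow {p : ℕ} (u : ℕ) (r : ZMod p) (h : r = 1 ∨ r = -1) :
    r ^ u = 1 ∨ r ^ u = -1 := by
  rcases h with h | h
  · left; rw [h, one_pow]
  · subst h
    rcases Nat.even_or_odd u with he | ho
    · left; exact he.neg_one_pow
    · right; exact ho.neg_one_pow

theorem stmt_6 (a b c : ℕ) (ha : 1 < a) (hb : 1 < b) (hc : 1 < c)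
    (hab : Nat.Coprime a b) (hac : Nat.Coprime a c) (hbc : Nat.Coprime b c)
    (hpa : ∀ p : ℕ, p.Prime → p ∣ c →
      ((a : ℤ) ≡ 1 [ZMOD (p : ℤ)] ∨ (a : ℤ) ≡ -1 [ZMOD (p : ℤ)]))
    (hpb : ∀ p : ℕ, p.Prime → p ∣ c →
      ((b : ℤ) ≡ 1 [ZMOD (p : ℤ)] ∨ (b : ℤ) ≡ -1 [ZMOD (p : ℤ)]))
    (h4 : Even c →
      (((a : ℤ) ≡ 1 [ZMOD 4] ∨ (a : ℤ) ≡ -1 [ZMOD 4]) ∧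
       ((b : ℤ) ≡ 1 [ZMOD 4] ∨ (b : ℤ) ≡ -1 [ZMOD 4])))
    (x y z : ℕ) (hx : 0 < x) (hy : 0 < y) (hz : 0 < z)
    (hz2 : c = 2 → 2 ≤ z)
    (heq : a ^ x + b ^ y = c ^ z) :
    Nat.Coprime x y := by
  by_contra hcop
  obtain ⟨q, hq, hqd⟩ := Nat.exists_prime_and_dvd (fun h : Nat.gcd x y = 1 => hcop h)
  have hqx : q ∣ x := hqd.trans (Nat.gcd_dvd_left x y)
  have hqy : q ∣ y := hqd.trans (Nat.gcd_dvd_right x y)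
  set X := a ^ (x / q) with hXdef
  set Y := b ^ (y / q) with hYdef
  have hxq0 : x / q ≠ 0 := by
    have := Nat.div_pos (Nat.le_of_dvd hx hqx) hq.pos; omega
  have hyq0 : y / q ≠ 0 := by
    have := Nat.div_pos (Nat.le_of_dvd hy hqy) hq.pos; omega
  have heq' : X ^ q + Y ^ q = c ^ z := by
    rw [hXdef, hYdef, ← pow_mul, ← pow_mul, Nat.div_mul_cancel hqx, Nat.div_mul_cancel hqy]
    exact heq
  have hX2 : 2 ≤ X := le_trans ha (Nat.le_self_pow hxq0 a)
  have hY2 : 2 ≤ Y := le_trans hb (Nat.le_self_pow hyq0 b)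
  -- sign facts
  have hXsign : ∀ p : ℕ, p.Prime → p ∣ c → ((X : ZMod p) = 1 ∨ (X : ZMod p) = -1) := by
    intro p pp pc
    have h1 : ((a : ℤ) : ZMod p) = ((1 : ℤ) : ZMod p) ∨ ((a : ℤ) : ZMod p) = ((-1 : ℤ) : ZMod p) := by
      rcases hpa p pp pc with h | h
      · exact Or.inl ((ZMod.intCast_eq_intCast_iff _ _ _).mpr h)
      · exact Or.inr ((ZMod.intCast_eq_intCast_iff _ _ _).mpr h)
    push_cast at h1
    have hXc : (X : ZMod p) = (a : ZMod p) ^ (x / q) := by rw [hXdef]; push_cast; ring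
    rw [hXc]
    exact signAux_pow _ _ h1
  have hYsign : ∀ p : ℕ, p.Prime → p ∣ c → ((Y : ZMod p) = 1 ∨ (Y : ZMod p) = -1) := by
    intro p pp pc
    have h1 : ((b : ℤ) : ZMod p) = ((1 : ℤ) : ZMod p) ∨ ((b : ℤ) : ZMod p) = ((-1 : ℤ) : ZMod p) := by
      rcases hpb p pp pc with h | h
      · exact Or.inl ((ZMod.intCast_eq_intCast_iff _ _ _).mpr h)
      · exact Or.inr ((ZMod.intCast_eq_intCast_iff _ _ _).mpr h)
    push_cast at h1
    have hYc : (Y : ZMod p) = (b : ZMod p) ^ (y / q) := by rw [hYdef]; push_cast; ring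
    rw [hYc]
    exact signAux_pow _ _ h1
  have hXcop : Nat.Coprime X c := Nat.Coprime.pow_left _ hac
  have hYcop : Nat.Coprime Y c := Nat.Coprime.pow_left _ hbc
  rcases hq.eq_two_or_odd' with rfl | hqodd
  · -- q = 2
    have hprime2 : ∀ p : ℕ, p.Prime → p ∣ c → p = 2 := by
      intro p pp pc
      haveI : NeZero p := ⟨pp.pos.ne'⟩
      have hdvd : p ∣ X ^ 2 + Y ^ 2 := by rw [heq']; exact dvd_pow pc hz.ne'
      have h0 : (X : ZMod p) ^ 2 + (Y : ZMod p) ^ 2 = 0 := by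
        have h := (ZMod.natCast_eq_zero_iff _ p).mpr hdvd
        push_cast at h
        exact h
      have hx1 : (X : ZMod p) ^ 2 = 1 := by
        rcases hXsign p pp pc with h | h <;> rw [h] <;> ring
      have hy1 : (Y : ZMod p) ^ 2 = 1 := by
        rcases hYsign p pp pc with h | h <;> rw [h] <;> ring
      have h2 : ((2 : ℕ) : ZMod p) = 0 := by
        push_cast
        rw [hx1, hy1] at h0
        linear_combination h0
      have : p ∣ 2 := (ZMod.natCast_eq_zero_iff 2 p).mp h2
      exact (Nat.prime_dvd_prime_iff_eq pp Nat.prime_two).mp this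
    have hceven : 2 ∣ c := by
      obtain ⟨p, pp, pc⟩ := Nat.exists_prime_and_dvd (by omega : c ≠ 1)
      rw [← hprime2 p pp pc]; exact pc
    have haodd : ¬ 2 ∣ a := by
      intro h
      have h2 : (2 : ℕ) ∣ Nat.gcd a c := Nat.dvd_gcd h hceven
      rw [hac] at h2; omega
    have hbodd : ¬ 2 ∣ b := by
      intro h
      have h2 : (2 : ℕ) ∣ Nat.gcd b c := Nat.dvd_gcd h hceven
      rw [hbc] at h2; omega
    have hXodd : ¬ 2 ∣ X := fun h => haodd (Nat.Prime.dvd_of_dvd_pow Nat.prime_two h)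
    have hYodd : ¬ 2 ∣ Y := fun h => hbodd (Nat.Prime.dvd_of_dvd_pow Nat.prime_two h)
    have hX4 : X ^ 2 % 4 = 1 := by
      obtain ⟨k, hk⟩ : ∃ k, X = 2 * k + 1 := ⟨X / 2, by omega⟩
      rw [hk]
      have : (2 * k + 1) ^ 2 = 4 * (k * k + k) + 1 := by ring
      omega
    have hY4 : Y ^ 2 % 4 = 1 := by
      obtain ⟨k, hk⟩ : ∃ k, Y = 2 * k + 1 := ⟨Y / 2, by omega⟩
      rw [hk]
      have : (2 * k + 1) ^ 2 = 4 * (k * k + k) + 1 := by ring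
      omega
    have h4dvd : 4 ∣ c ^ z := by
      by_cases hc2 : c = 2
      · subst hc2
        have hz' := hz2 rfl
        calc (4 : ℕ) = 2 ^ 2 := by norm_num
        _ ∣ 2 ^ z := pow_dvd_pow 2 hz'
      · obtain ⟨m, hm⟩ := hceven
        have hm1 : m ≠ 1 := by intro h; apply hc2; omega
        have hm0 : m ≠ 0 := by intro h; omega
        obtain ⟨p, pp, pm⟩ := Nat.exists_prime_and_dvd hm1
        have pc : p ∣ c := hm ▸ Dvd.dvd.mul_left pm 2
        have : p = 2 := hprime2 p pp pc
        subst this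
        have : 4 ∣ c := by obtain ⟨t, rfl⟩ := pm; exact ⟨t, by omega⟩
        exact this.trans (dvd_pow_self c hz.ne')
    omega
  · -- q odd
    have hq3 : 3 ≤ q := by
      have h2 := hq.two_le
      have hne : q ≠ 2 := by rintro rfl; simp [Nat.odd_iff] at hqodd
      omega
    haveI := Fact.mk hq
    have hT := geom_sum₂_mul (X : ℤ) (-(Y : ℤ)) q
    set T : ℤ := ∑ i ∈ range q, (X : ℤ) ^ i * (-(Y : ℤ)) ^ (q - 1 - i) with hTdef
    rw [hqodd.neg_pow, sub_neg_eq_add, sub_neg_eq_add] at hT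
    have hdvdNat : (X + Y) ∣ X ^ q + Y ^ q := by
      have h2 : ((X + Y : ℕ) : ℤ) ∣ ((X ^ q + Y ^ q : ℕ) : ℤ) := by
        push_cast
        exact ⟨T, by linarith [hT]⟩
      exact_mod_cast h2
    set S := (X ^ q + Y ^ q) / (X + Y) with hSdef
    have hS : (X + Y) * S = X ^ q + Y ^ q := Nat.mul_div_cancel' hdvdNat
    have hScast : (S : ℤ) = T := by
      have h1 : ((X : ℤ) + Y) * (S : ℤ) = (X : ℤ) ^ q + (Y : ℤ) ^ q := by exact_mod_cast hS
      have h2 : ((X : ℤ) + Y) * (S : ℤ) = ((X : ℤ) + Y) * T := by rw [h1, ← hT]; ring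
      exact mul_left_cancel₀ (by positivity) h2
    have hqlt : q < 2 ^ (q - 1) := by
      have h := aux_two_pow (q - 3)
      have h1 : q - 3 + 4 = q + 1 := by omega
      have h2 : q - 3 + 2 = q - 1 := by omega
      rw [h1, h2] at h; omega
    have hpowX : 2 ^ (q - 1) * X ≤ X ^ q := by
      calc 2 ^ (q - 1) * X ≤ X ^ (q - 1) * X :=
            Nat.mul_le_mul_right X (Nat.pow_le_pow_left hX2 _)
        _ = X ^ q := by rw [← pow_succ]; congr 1; omega
    have hpowY : 2 ^ (q - 1) * Y ≤ Y ^ q := by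
      calc 2 ^ (q - 1) * Y ≤ Y ^ (q - 1) * Y :=
            Nat.mul_le_mul_right Y (Nat.pow_le_pow_left hY2 _)
        _ = Y ^ q := by rw [← pow_succ]; congr 1; omega
    have hSq : q < S := by
      have h3 : (X + Y) * q < X ^ q + Y ^ q := by
        have h4 : (X + Y) * q < (X + Y) * 2 ^ (q - 1) :=
          mul_lt_mul_of_pos_left hqlt (by omega : 0 < X + Y)
        have e : (X + Y) * 2 ^ (q - 1) = 2 ^ (q - 1) * X + 2 ^ (q - 1) * Y := by ring
        omega
      by_contra hle
      push_neg at hle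
      have h5 : (X + Y) * S ≤ (X + Y) * q := Nat.mul_le_mul_left _ hle
      linarith [hS, h3]
    have heqz : (X + Y) * S = c ^ z := hS.trans heq'
    have claim : ∀ p : ℕ, p.Prime → p ∣ S → p = q ∧ p ∣ X + Y := by
      intro p pp pS
      haveI : NeZero p := ⟨pp.pos.ne'⟩
      have pc : p ∣ c := pp.dvd_of_dvd_pow
        (show p ∣ c ^ z by rw [← heqz]; exact pS.mul_left (X + Y))
      have hpow : p ∣ X ^ q + Y ^ q := by rw [heq']; exact dvd_pow pc hz.ne'
      have h0 : (X : ZMod p) ^ q + (Y : ZMod p) ^ q = 0 := by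
        have h := (ZMod.natCast_eq_zero_iff _ p).mpr hpow
        push_cast at h; exact h
      have hXs := hXsign p pp pc
      have hYs := hYsign p pp pc
      have hpXY : p ∣ X + Y := by
        by_cases hp2 : p = 2
        · subst hp2
          have hceven : 2 ∣ c := pc
          have haodd : ¬ (2 : ℕ) ∣ a := by
            intro h; have h2 : (2 : ℕ) ∣ Nat.gcd a c := Nat.dvd_gcd h hceven
            rw [hac] at h2; omega
          have hbodd : ¬ (2 : ℕ) ∣ b := by
            intro h; have h2 : (2 : ℕ) ∣ Nat.gcd b c := Nat.dvd_gcd h hceven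
            rw [hbc] at h2; omega
          have hXodd : ¬ 2 ∣ X := fun h => haodd (Nat.Prime.dvd_of_dvd_pow Nat.prime_two h)
          have hYodd : ¬ 2 ∣ Y := fun h => hbodd (Nat.Prime.dvd_of_dvd_pow Nat.prime_two h)
          omega
        · have hp2' : ((2 : ℕ) : ZMod p) ≠ 0 := by
            intro h
            have hd : p ∣ 2 := (ZMod.natCast_eq_zero_iff 2 p).mp h
            exact hp2 ((Nat.prime_dvd_prime_iff_eq pp Nat.prime_two).mp hd)
          have key : (X : ZMod p) + (Y : ZMod p) = 0 := by
            rcases hXs with h1 | h1 <;> rcases hYs with h2 | h2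
            · exfalso; apply hp2'
              rw [h1, h2, one_pow] at h0
              push_cast; linear_combination h0
            · rw [h1, h2]; ring
            · rw [h1, h2]; ring
            · exfalso; apply hp2'
              rw [h1, h2, hqodd.neg_one_pow] at h0
              push_cast; linear_combination -h0
          have hcast : ((X + Y : ℕ) : ZMod p) = 0 := by push_cast; exact key
          exact (ZMod.natCast_eq_zero_iff _ p).mp hcast
      have hYX : (Y : ZMod p) = -(X : ZMod p) := by
        have h := (ZMod.natCast_eq_zero_iff _ p).mpr hpXY
        push_cast at h
        linear_combination h
      have hEvq : Even (q - 1) := Nat.Odd.sub_odd hqodd odd_one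
      have hX1 : (X : ZMod p) ^ (q - 1) = 1 := by
        rcases hXs with h1 | h1 <;> rw [h1]
        · rw [one_pow]
        · exact hEvq.neg_one_pow
      have hT0 : ((T : ℤ) : ZMod p) = (q : ZMod p) := by
        rw [hTdef]
        push_cast
        have hterm : ∀ i ∈ range q,
            (X : ZMod p) ^ i * (-(Y : ZMod p)) ^ (q - 1 - i) = 1 := by
          intro i hi
          rw [hYX, neg_neg, ← pow_add]
          have hie : i + (q - 1 - i) = q - 1 := by
            have := mem_range.mp hi; omega
          rw [hie, hX1]
        rw [Finset.sum_congr rfl hterm, Finset.sum_const, card_range]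
        simp
      have hS0 : ((S : ℕ) : ZMod p) = 0 := (ZMod.natCast_eq_zero_iff _ p).mpr pS
      have hq0 : ((q : ℕ) : ZMod p) = 0 := by
        have hST : ((S : ℤ) : ZMod p) = ((T : ℤ) : ZMod p) := by rw [hScast]
        rw [hT0] at hST
        rw [show ((S : ℤ) : ZMod p) = ((S : ℕ) : ZMod p) by push_cast; rfl, hS0] at hST
        exact hST.symm
      have hd : p ∣ q := (ZMod.natCast_eq_zero_iff q p).mp hq0
      exact ⟨(Nat.prime_dvd_prime_iff_eq pp hq).mp hd, hpXY⟩
    have hS1 : S ≠ 1 := by omega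
    obtain ⟨p, pp, pS⟩ := Nat.exists_prime_and_dvd hS1
    obtain ⟨hpq, hqXY⟩ := claim p pp pS
    subst hpq
    have hS0' : S ≠ 0 := by omega
    have hq2S : p ^ 2 ∣ S := by
      obtain ⟨m, hm⟩ := pS
      have hm1 : m ≠ 1 := by rintro rfl; omega
      obtain ⟨r, rp, rm⟩ := Nat.exists_prime_and_dvd hm1
      have rS : r ∣ S := hm ▸ (rm.mul_left p)
      obtain ⟨hrq, -⟩ := claim r rp rS
      subst hrq
      obtain ⟨t, rfl⟩ := rm
      exact ⟨t, by rw [hm]; ring⟩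
    have hqc : p ∣ c := pp.dvd_of_dvd_pow
      (show p ∣ c ^ z by rw [← heqz]; exact pS.mul_left (X + Y))
    have hqX : ¬ p ∣ X := by
      intro h
      have hqa : p ∣ a := pp.dvd_of_dvd_pow h
      have h2 : p ∣ Nat.gcd a c := Nat.dvd_gcd hqa hqc
      rw [hac] at h2
      have h3 := pp.two_le
      have h4 := Nat.dvd_one.mp h2
      omega
    have hlte := padicValNat.pow_add_pow (p := p) hqodd hqXY hqX hqodd
    have hself : padicValNat p p = 1 := padicValNat.self pp.one_lt
    have hXY0' : X + Y ≠ 0 := by omega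
    have hmul : padicValNat p ((X + Y) * S) = padicValNat p (X + Y) + padicValNat p S :=
      padicValNat.mul hXY0' hS0'
    have hvS : 2 ≤ padicValNat p S := by
      have h := (pp.pow_dvd_iff_le_factorization hS0').mp hq2S
      rwa [Nat.factorization_def _ pp] at h
    rw [hS] at hmul
    omega
end

section
/- Let a, b, c be pairwise coprime integers greater than 1 with a ≡ δ_a and b ≡ δ_b modulo c' for signs δ_a, δ_b ∈ {1,-1} (c' = 4 if c = 2, c' = c otherwise). Suppose (x,y,z) and (X,Y,Z) are two positive-integer solutions of a^x + b^y = c^z and a^X + b^Y = c^Z with z ≤ Z (and z ≥ 2 if c = 2). Then a^Δ ≡ δ_a^Δ (mod C^z) and b^Δ ≡ δ_b^Δ (mod C^z), where Δ = |xY − Xy| and C = c if c = 2 or c ≢ 2 (mod 4), and C = c/2 if c > 2 and c ≡ 2 (mod 4). -/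
lemma pm_pow_parity (δ : ℤ) (hδ : δ = 1 ∨ δ = -1) (m n : ℕ) (h : m % 2 = n % 2) :
    δ ^ m = δ ^ n := by
  rcases hδ with h1 | h1 <;> subst h1
  · simp
  · rw [neg_one_pow_eq_pow_mod_two, h, ← neg_one_pow_eq_pow_mod_two]

lemma pm_pow_val (δ : ℤ) (hδ : δ = 1 ∨ δ = -1) (n : ℕ) : δ ^ n = 1 ∨ δ ^ n = -1 := by
  have : δ ^ n * δ ^ n = 1 := by
    rw [← pow_add, pm_pow_parity δ hδ (n + n) 0 (by omega), pow_zero]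
  exact mul_self_eq_one_iff.mp this

lemma cancel_coprime {m u s t : ℤ} (hm : 0 < m) (hg : Int.gcd m u = 1)
    (h : u * s ≡ u * t [ZMOD m]) : s ≡ t [ZMOD m] := by
  have h2 := Int.ModEq.cancel_left_div_gcd hm h
  simpa [hg] using h2

lemma keymod (a b c : ℕ) (hc : 0 < c) (hac : Nat.Coprime a c) (x y X Y z Δ : ℕ)
    (h1 : (a : ℤ) ^ x ≡ -(b : ℤ) ^ y [ZMOD (c : ℤ) ^ z])
    (h2 : (a : ℤ) ^ X ≡ -(b : ℤ) ^ Y [ZMOD (c : ℤ) ^ z])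
    (hΔ : Δ = ((x : ℤ) * Y - (X : ℤ) * y).natAbs) :
    (a : ℤ) ^ Δ ≡ (-1) ^ (y + Y) [ZMOD (c : ℤ) ^ z] := by
  have hm : (0 : ℤ) < (c : ℤ) ^ z := by positivity
  have hΔ' : Δ = (((x * Y : ℕ) : ℤ) - ((X * y : ℕ) : ℤ)).natAbs := by push_cast [hΔ]; ring_nf
  have e1 : (a : ℤ) ^ (x * Y) ≡ (-1) ^ Y * (b : ℤ) ^ (y * Y) [ZMOD (c : ℤ) ^ z] := by
    have := h1.pow Y
    rwa [← pow_mul, neg_pow, ← pow_mul] at this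
  have e2 : (a : ℤ) ^ (X * y) ≡ (-1) ^ y * (b : ℤ) ^ (y * Y) [ZMOD (c : ℤ) ^ z] := by
    have := h2.pow y
    rwa [← pow_mul, neg_pow, ← pow_mul, Nat.mul_comm Y y] at this
  have key : (a : ℤ) ^ (x * Y) * (-1) ^ y ≡ (a : ℤ) ^ (X * y) * (-1) ^ Y [ZMOD (c : ℤ) ^ z] := by
    calc (a : ℤ) ^ (x * Y) * (-1) ^ y
        ≡ ((-1) ^ Y * (b : ℤ) ^ (y * Y)) * (-1) ^ y [ZMOD (c : ℤ) ^ z] := e1.mul_right _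
      _ = ((-1) ^ y * (b : ℤ) ^ (y * Y)) * (-1) ^ Y := by ring
      _ ≡ (a : ℤ) ^ (X * y) * (-1) ^ Y [ZMOD (c : ℤ) ^ z] := (e2.mul_right _).symm
  have hsq : ∀ n : ℕ, ((-1 : ℤ)) ^ n * (-1) ^ n = 1 := by
    intro n
    rw [← pow_add, pm_pow_parity (-1) (Or.inr rfl) (n + n) 0 (by omega), pow_zero]
  have hgcd : ∀ Q : ℕ, Int.gcd ((c : ℤ) ^ z) ((a : ℤ) ^ Q) = 1 := by
    intro Q
    have : Nat.Coprime (c ^ z) (a ^ Q) := hac.symm.pow _ _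
    rw [show ((c : ℤ) ^ z) = ((c ^ z : ℕ) : ℤ) by push_cast; ring,
        show ((a : ℤ) ^ Q) = ((a ^ Q : ℕ) : ℤ) by push_cast; ring,
        Int.gcd_natCast_natCast]
    exact this
  rcases le_or_gt (X * y) (x * Y) with hle | hlt
  · have hP : x * Y = X * y + Δ := by
      generalize hp : x * Y = P at *
      generalize hq : X * y = Q at *
      omega
    have key2 : (a : ℤ) ^ (X * y) * ((a : ℤ) ^ Δ * (-1) ^ y) ≡
        (a : ℤ) ^ (X * y) * (-1) ^ Y [ZMOD (c : ℤ) ^ z] := by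
      calc (a : ℤ) ^ (X * y) * ((a : ℤ) ^ Δ * (-1) ^ y)
          = (a : ℤ) ^ (x * Y) * (-1) ^ y := by rw [hP, pow_add]; ring
        _ ≡ (a : ℤ) ^ (X * y) * (-1) ^ Y [ZMOD (c : ℤ) ^ z] := key
    have := (cancel_coprime hm (hgcd _) key2).mul_right ((-1 : ℤ) ^ y)
    calc (a : ℤ) ^ Δ = (a : ℤ) ^ Δ * (-1) ^ y * (-1) ^ y := by rw [mul_assoc, hsq, mul_one]
      _ ≡ (-1) ^ Y * (-1) ^ y [ZMOD (c : ℤ) ^ z] := this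
      _ = (-1) ^ (y + Y) := by rw [pow_add]; ring
  · have hP : X * y = x * Y + Δ := by
      generalize hp : x * Y = P at *
      generalize hq : X * y = Q at *
      omega
    have key2 : (a : ℤ) ^ (x * Y) * ((-1 : ℤ) ^ y) ≡
        (a : ℤ) ^ (x * Y) * ((a : ℤ) ^ Δ * (-1) ^ Y) [ZMOD (c : ℤ) ^ z] := by
      calc (a : ℤ) ^ (x * Y) * ((-1 : ℤ) ^ y)
          ≡ (a : ℤ) ^ (X * y) * (-1) ^ Y [ZMOD (c : ℤ) ^ z] := key
        _ = (a : ℤ) ^ (x * Y) * ((a : ℤ) ^ Δ * (-1) ^ Y) := by rw [hP, pow_add]; ring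
    have := (cancel_coprime hm (hgcd _) key2).mul_right ((-1 : ℤ) ^ Y)
    have h3 : ((-1 : ℤ)) ^ y * (-1) ^ Y ≡ (a : ℤ) ^ Δ [ZMOD (c : ℤ) ^ z] := by
      calc ((-1 : ℤ)) ^ y * (-1) ^ Y
          ≡ (a : ℤ) ^ Δ * (-1) ^ Y * (-1) ^ Y [ZMOD (c : ℤ) ^ z] := this
        _ = (a : ℤ) ^ Δ := by rw [mul_assoc, hsq, mul_one]
    calc (a : ℤ) ^ Δ ≡ ((-1 : ℤ)) ^ y * (-1) ^ Y [ZMOD (c : ℤ) ^ z] := h3.symm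
      _ = (-1) ^ (y + Y) := by rw [pow_add]

lemma delta_pow (δa δb : ℤ) (hδa : δa = 1 ∨ δa = -1) (hδb : δb = 1 ∨ δb = -1)
    (x y X Y Δ : ℕ) (h1 : δa ^ x = -δb ^ y) (h2 : δa ^ X = -δb ^ Y)
    (hΔ : Δ % 2 = (x * Y + X * y) % 2) : δa ^ Δ = (-1) ^ (y + Y) := by
  rw [pm_pow_parity δa hδa Δ (x * Y + X * y) hΔ, pow_add, pow_mul, pow_mul, h1, h2,
      neg_pow (δb ^ y), neg_pow (δb ^ Y), ← pow_mul δb y Y, ← pow_mul δb Y y]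
  have hb : δb ^ (y * Y) * δb ^ (Y * y) = 1 := by
    rw [← pow_add, pm_pow_parity δb hδb (y * Y + Y * y) 0 (by rw [Nat.mul_comm Y y]; omega),
        pow_zero]
  calc (-1 : ℤ) ^ Y * δb ^ (y * Y) * ((-1) ^ y * δb ^ (Y * y))
      = ((-1 : ℤ) ^ y * (-1) ^ Y) * (δb ^ (y * Y) * δb ^ (Y * y)) := by ring
    _ = (-1) ^ (y + Y) := by rw [hb, mul_one, pow_add]

theorem stmt_8 (a b c : ℕ) (ha : 1 < a) (hb : 1 < b) (hc : 1 < c)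
    (hab : Nat.Coprime a b) (hac : Nat.Coprime a c) (hbc : Nat.Coprime b c)
    (c' : ℕ) (hc' : c' = if c = 2 then 4 else c)
    (δa δb : ℤ) (hδa : δa = 1 ∨ δa = -1) (hδb : δb = 1 ∨ δb = -1)
    (hca : (a : ℤ) ≡ δa [ZMOD (c' : ℤ)]) (hcb : (b : ℤ) ≡ δb [ZMOD (c' : ℤ)])
    (x y z X Y Z : ℕ) (hx : 0 < x) (hy : 0 < y) (hz : 0 < z)
    (hX : 0 < X) (hY : 0 < Y) (hZ : 0 < Z) (hzZ : z ≤ Z)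
    (hz2 : c = 2 → 2 ≤ z)
    (heq1 : a ^ x + b ^ y = c ^ z) (heq2 : a ^ X + b ^ Y = c ^ Z)
    (C : ℕ) (hC : C = if 2 < c ∧ c % 4 = 2 then c / 2 else c)
    (Δ : ℕ) (hΔ : Δ = ((x : ℤ) * Y - (X : ℤ) * y).natAbs) :
    (a : ℤ) ^ Δ ≡ δa ^ Δ [ZMOD ((C : ℤ) ^ z)] ∧
    (b : ℤ) ^ Δ ≡ δb ^ Δ [ZMOD ((C : ℤ) ^ z)] := by
  -- C^z divides c^z
  have hCc : C ∣ c := by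
    rw [hC]; split_ifs with h
    · exact ⟨2, by omega⟩
    · exact dvd_rfl
  have hCdvd : ((C : ℤ) ^ z) ∣ ((c : ℤ) ^ z) :=
    pow_dvd_pow_of_dvd (Int.natCast_dvd_natCast.mpr hCc) z
  -- c' facts
  have hc'3 : 3 ≤ c' := by rw [hc']; split_ifs with h <;> omega
  have hc'dvd : (c' : ℤ) ∣ (c : ℤ) ^ z := by
    rw [hc']; split_ifs with h
    · subst h
      have h4 : (4 : ℕ) ∣ 2 ^ z := by
        have hz' := hz2 rfl
        calc (4 : ℕ) = 2 ^ 2 := by norm_num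
          _ ∣ 2 ^ z := pow_dvd_pow 2 hz'
      exact_mod_cast h4
    · exact dvd_pow_self _ (by omega)
  -- sign relations
  have hsign : ∀ u v : ℕ, a ^ u + b ^ v = c ^ z ∨ a ^ u + b ^ v = c ^ Z →
      δa ^ u = -δb ^ v := by
    intro u v huv
    have hcast : ((a : ℤ)) ^ u + (b : ℤ) ^ v ≡ 0 [ZMOD (c' : ℤ)] := by
      rcases huv with h | h
      · have : ((a : ℤ)) ^ u + (b : ℤ) ^ v = (c : ℤ) ^ z := by exact_mod_cast h
        rw [this]
        exact (Int.modEq_zero_iff_dvd).mpr hc'dvd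
      · have : ((a : ℤ)) ^ u + (b : ℤ) ^ v = (c : ℤ) ^ Z := by exact_mod_cast h
        rw [this]
        refine (Int.modEq_zero_iff_dvd).mpr (hc'dvd.trans (pow_dvd_pow _ hzZ))
    have hmod : δa ^ u + δb ^ v ≡ 0 [ZMOD (c' : ℤ)] :=
      (((hca.pow u).add (hcb.pow v)).symm).trans hcast
    have hdvd2 : (c' : ℤ) ∣ (δa ^ u + δb ^ v) := (Int.modEq_zero_iff_dvd).mp hmod
    have hzero : δa ^ u + δb ^ v = 0 := by
      refine Int.eq_zero_of_abs_lt_dvd hdvd2 ?_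
      have hc'Z : (3 : ℤ) ≤ (c' : ℤ) := by exact_mod_cast hc'3
      rcases pm_pow_val δa hδa u with h1 | h1 <;> rcases pm_pow_val δb hδb v with h2 | h2 <;>
        rw [h1, h2] <;> norm_num <;> linarith
    linarith [hzero]
  have hsx : δa ^ x = -δb ^ y := hsign x y (Or.inl heq1)
  have hsX : δa ^ X = -δb ^ Y := hsign X Y (Or.inr heq2)
  -- modular congruences mod c^z
  have h1a : (a : ℤ) ^ x ≡ -(b : ℤ) ^ y [ZMOD (c : ℤ) ^ z] := by
    rw [Int.modEq_iff_dvd]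
    refine ⟨-1, ?_⟩
    have : ((a : ℤ)) ^ x + (b : ℤ) ^ y = (c : ℤ) ^ z := by exact_mod_cast heq1
    linarith [this]
  have h2a : (a : ℤ) ^ X ≡ -(b : ℤ) ^ Y [ZMOD (c : ℤ) ^ z] := by
    rw [Int.modEq_iff_dvd]
    refine ⟨-((c : ℤ) ^ (Z - z)), ?_⟩
    have hZz : z + (Z - z) = Z := by omega
    have : ((a : ℤ)) ^ X + (b : ℤ) ^ Y = (c : ℤ) ^ Z := by exact_mod_cast heq2
    rw [← hZz, pow_add] at this
    linarith [this]
  have h1b : (b : ℤ) ^ y ≡ -(a : ℤ) ^ x [ZMOD (c : ℤ) ^ z] := by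
    rw [Int.modEq_iff_dvd]
    refine ⟨-1, ?_⟩
    have : ((a : ℤ)) ^ x + (b : ℤ) ^ y = (c : ℤ) ^ z := by exact_mod_cast heq1
    linarith [this]
  have h2b : (b : ℤ) ^ Y ≡ -(a : ℤ) ^ X [ZMOD (c : ℤ) ^ z] := by
    rw [Int.modEq_iff_dvd]
    refine ⟨-((c : ℤ) ^ (Z - z)), ?_⟩
    have hZz : z + (Z - z) = Z := by omega
    have : ((a : ℤ)) ^ X + (b : ℤ) ^ Y = (c : ℤ) ^ Z := by exact_mod_cast heq2
    rw [← hZz, pow_add] at this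
    linarith [this]
  -- parity of Δ
  have hpar : Δ % 2 = (x * Y + X * y) % 2 := by
    have hΔ' : Δ = (((x * Y : ℕ) : ℤ) - ((X * y : ℕ) : ℤ)).natAbs := by push_cast [hΔ]; ring_nf
    generalize hp : x * Y = P at *
    generalize hq : X * y = Q at *
    omega
  have hΔb : Δ = ((y : ℤ) * X - (Y : ℤ) * x).natAbs := by
    rw [hΔ, ← Int.natAbs_neg]; ring_nf
  -- combine
  have ka := keymod a b c (by omega) hac x y X Y z Δ h1a h2a hΔ
  have kb := keymod b a c (by omega) hbc y x Y X z Δ h1b h2b hΔb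
  have da : δa ^ Δ = (-1) ^ (y + Y) := delta_pow δa δb hδa hδb x y X Y Δ hsx hsX hpar
  have hsy : δb ^ y = -δa ^ x := by linarith [hsx]
  have hsY : δb ^ Y = -δa ^ X := by linarith [hsX]
  have hparb : Δ % 2 = (y * X + Y * x) % 2 := by
    rw [hpar, Nat.mul_comm x Y, Nat.mul_comm X y]; omega
  have db : δb ^ Δ = (-1) ^ (x + X) := delta_pow δb δa hδb hδa y x Y X Δ hsy hsY hparb
  constructor
  · rw [da]
    exact Int.ModEq.of_dvd hCdvd ka
  · rw [db]
    exact Int.ModEq.of_dvd hCdvd kb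
end

section
/- Under the same hypotheses as the congruence a^Δ ≡ δ_a^Δ, b^Δ ≡ δ_b^Δ (mod C^z): if additionally Δ ≠ 0, then C^z divides gcd(a − δ_a, b − δ_b)·Δ. -/
open Finset in
private lemma lte_aux (p : ℕ) (hp : p.Prime) {A δ : ℤ} (hδ : δ = 1 ∨ δ = -1)
    (hpa : ¬ (p:ℤ) ∣ A) (hpd : (p:ℤ) ∣ A - δ) (h4 : p = 2 → 4 ∣ A - δ) {Δ : ℕ} (hΔ0 : Δ ≠ 0) :
    emultiplicity (p:ℤ) (A ^ Δ - δ ^ Δ) = emultiplicity (p:ℤ) (A - δ) + emultiplicity p Δ := by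
  by_cases hp2 : p = 2
  · subst hp2
    have hpd2 : (2:ℤ) ∣ A - δ := by exact_mod_cast hpd
    have hpa2 : ¬ (2:ℤ) ∣ A := by exact_mod_cast hpa
    have h44 : (4:ℤ) ∣ A - δ := h4 rfl
    by_cases hE : Even Δ
    · have key := Int.two_pow_sub_pow hpd2 hpa2 hE
      have hsum : emultiplicity (2:ℤ) (A + δ) = 1 := by
        rw [show ((1:ℕ∞) = ((1:ℕ):ℕ∞)) by norm_num, emultiplicity_eq_coe]
        constructor
        · have h := dvd_add hpd2 (⟨δ, rfl⟩ : (2:ℤ) ∣ 2*δ)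
          have e : A - δ + 2*δ = A + δ := by ring
          rw [e] at h
          simpa [pow_one] using h
        · intro hcon
          have : (4:ℤ) ∣ (A + δ) - (A - δ) := dvd_sub (by norm_num at hcon ⊢; exact hcon) h44
          have h2δ : (4:ℤ) ∣ 2 * δ := by convert this using 1; ring
          rcases hδ with rfl | rfl <;> norm_num at h2δ
      rw [hsum] at key
      have : emultiplicity (2:ℤ) ((Δ:ℕ):ℤ) = emultiplicity 2 Δ := by
        exact_mod_cast Int.natCast_emultiplicity 2 Δ
      rw [this] at key
      have key2 : emultiplicity (2:ℤ) (A ^ Δ - δ ^ Δ) + 1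
          = (emultiplicity (2:ℤ) (A - δ) + emultiplicity 2 Δ) + 1 := by
        rw [key]; ring
      have := WithTop.add_right_cancel (by norm_num : (1:ℕ∞) ≠ ⊤) key2
      exact_mod_cast this
    · -- Δ odd
      have hgeom := geom_sum₂_mul A δ Δ
      set S : ℤ := ∑ i ∈ range Δ, A ^ i * δ ^ (Δ - 1 - i) with hS
      have hSodd : ¬ (2:ℤ) ∣ S := by
        intro hdvd
        have h0 : ((S : ZMod 2)) = 0 := by
          rw [ZMod.intCast_zmod_eq_zero_iff_dvd]; exact_mod_cast hdvd
        have hA1 : ((A : ZMod 2)) = 1 := by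
          have : ((A : ZMod 2)) ≠ 0 := by
            rw [Ne, ZMod.intCast_zmod_eq_zero_iff_dvd]; exact_mod_cast hpa2
          revert this; generalize (A : ZMod 2) = u; revert u; decide
        have hδ1 : ((δ : ZMod 2)) = 1 := by rcases hδ with rfl | rfl <;> decide
        rw [hS] at h0
        push_cast at h0
        rw [hA1, hδ1] at h0
        simp only [one_pow, one_mul, Finset.sum_const, Finset.card_range, nsmul_eq_mul, mul_one]
          at h0
        rw [ZMod.natCast_eq_zero_iff] at h0
        exact (Nat.not_even_iff_odd.mp hE).not_two_dvd_nat h0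
      have hfact : A ^ Δ - δ ^ Δ = S * (A - δ) := hgeom.symm
      have e1 : emultiplicity ((2:ℕ):ℤ) S = 0 :=
        emultiplicity_eq_zero.mpr (by exact_mod_cast hSodd)
      have e2 : emultiplicity 2 Δ = 0 :=
        emultiplicity_eq_zero.mpr (Nat.not_even_iff_odd.mp hE).not_two_dvd_nat
      rw [hfact, emultiplicity_mul (Nat.prime_iff_prime_int.mp hp), e1, e2, zero_add, add_zero]
  · exact Int.emultiplicity_pow_sub_pow hp (hp.odd_of_ne_two hp2) hpd hpa Δ

private lemma val_convert (p : ℕ) (hp : p.Prime) {m : ℤ} (hm : m ≠ 0) :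
    ((m.natAbs.factorization p : ℕ∞)) = emultiplicity (p:ℤ) m := by
  haveI : Fact p.Prime := ⟨hp⟩
  rw [Nat.factorization_def _ hp,
    padicValNat_eq_emultiplicity (Int.natAbs_ne_zero.mpr hm),
    Int.emultiplicity_natAbs]

private lemma letter_val (p : ℕ) (hp : p.Prime) (c c' C z Δ : ℕ) (hc : 1 < c) (hz : 0 < z)
    (hΔ0 : Δ ≠ 0) (hc' : c' = if c = 2 then 4 else c)
    (hC : C = if 2 < c ∧ c % 4 = 2 then c / 2 else c)
    (a : ℕ) (ha : 1 < a) (hac : Nat.Coprime a c) (δ : ℤ) (hδ : δ = 1 ∨ δ = -1)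
    (hmod : (c' : ℤ) ∣ (a:ℤ) - δ)
    (hdvd : ((c:ℤ))^z ∣ (a:ℤ)^Δ - δ^Δ) :
    z * C.factorization p ≤ ((a:ℤ) - δ).natAbs.factorization p + Δ.factorization p := by
  by_cases hpC : p ∣ C
  swap
  · simp [Nat.factorization_eq_zero_of_not_dvd hpC]
  have hc0 : c ≠ 0 := by omega
  have hCc : C ∣ c := by
    rw [hC]; split
    · exact ⟨2, by omega⟩
    · exact dvd_rfl
  have hC0 : C ≠ 0 := by
    rintro rfl; exact hc0 (Nat.eq_zero_of_zero_dvd hCc)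
  have hpc : p ∣ c := hpC.trans hCc
  have hpc' : p ∣ c' := by
    rw [hc']; split
    · next h => exact (h ▸ hpc).trans (by norm_num)
    · exact hpc
  have hpδdvd : (p:ℤ) ∣ (a:ℤ) - δ :=
    dvd_trans (Int.natCast_dvd_natCast.mpr hpc') hmod
  have hpa : ¬ (p:ℤ) ∣ (a:ℤ) := by
    rw [Int.natCast_dvd_natCast]
    intro h
    have : p ∣ 1 := hac ▸ Nat.dvd_gcd h hpc
    exact hp.ne_one (Nat.dvd_one.mp this)
  have h4 : p = 2 → (4:ℤ) ∣ (a:ℤ) - δ := by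
    rintro rfl
    have h4c' : (4:ℕ) ∣ c' := by
      rw [hc']; split
      · norm_num
      · next hne =>
        by_cases h42 : 2 < c ∧ c % 4 = 2
        · exfalso
          rw [hC, if_pos h42] at hpC
          omega
        · omega
    calc (4:ℤ) = ((4:ℕ):ℤ) := by norm_num
    _ ∣ (c':ℤ) := Int.natCast_dvd_natCast.mpr h4c'
    _ ∣ _ := hmod
  have ha2 : (2:ℤ) ≤ (a:ℤ) := by exact_mod_cast ha
  have hδle : δ^Δ ≤ 1 ∧ (-1:ℤ) ≤ δ^Δ := by
    rcases neg_one_pow_eq_or ℤ Δ with h | h <;> rcases hδ with rfl | rfl <;>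
      simp [h, one_pow] <;> omega
  have hNa0 : (a:ℤ)^Δ - δ^Δ ≠ 0 := by
    have h2 : (2:ℤ) ≤ (a:ℤ)^Δ := le_trans ha2 (le_self_pow₀ (by omega) hΔ0)
    have := hδle.1
    intro h; rw [sub_eq_zero] at h; omega
  have hda0 : (a:ℤ) - δ ≠ 0 := by
    rcases hδ with rfl | rfl <;> intro h <;> rw [sub_eq_zero] at h <;> omega
  have hlte := lte_aux p hp hδ hpa hpδdvd h4 hΔ0
  -- convert LTE to factorization equality
  have hfac : ((a:ℤ)^Δ - δ^Δ).natAbs.factorization p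
      = ((a:ℤ) - δ).natAbs.factorization p + Δ.factorization p := by
    haveI : Fact p.Prime := ⟨hp⟩
    have hΔconv : ((Δ.factorization p : ℕ∞)) = emultiplicity p Δ := by
      rw [Nat.factorization_def _ hp,
        padicValNat_eq_emultiplicity hΔ0]
    have : ((((a:ℤ)^Δ - δ^Δ).natAbs.factorization p : ℕ∞))
        = ((((a:ℤ) - δ).natAbs.factorization p + Δ.factorization p : ℕ) : ℕ∞) := by
      rw [val_convert p hp hNa0, hlte, ← val_convert p hp hda0, ← hΔconv]
      push_cast
      rfl
    exact_mod_cast this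
  -- divisibility in ℕ
  have hdvdN : c ^ z ∣ ((a:ℤ)^Δ - δ^Δ).natAbs := by
    rw [← Int.natAbs_natCast (c ^ z)]
    exact Int.natAbs_dvd_natAbs.mpr (by push_cast; exact hdvd)
  calc z * C.factorization p ≤ z * c.factorization p := by
        have := Finsupp.le_def.mp ((Nat.factorization_le_iff_dvd hC0 hc0).mpr hCc) p
        exact Nat.mul_le_mul_left z this
    _ = (c ^ z).factorization p := by rw [Nat.factorization_pow]; rfl
    _ ≤ ((a:ℤ)^Δ - δ^Δ).natAbs.factorization p :=
        Finsupp.le_def.mp ((Nat.factorization_le_iff_dvd (pow_ne_zero _ hc0)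
          (Int.natAbs_ne_zero.mpr hNa0)).mpr hdvdN) p
    _ = _ := hfac

private lemma cancel_pow {R : Type*} [CommRing R] {u : R} (hu : IsUnit u) {k Δ : ℕ}
    {e1 e2 : R} (h : e1 * u ^ (k + Δ) = e2 * u ^ k) : e1 * u ^ Δ = e2 := by
  apply (hu.pow k).mul_right_cancel
  calc e1 * u ^ Δ * u ^ k = e1 * u ^ (k + Δ) := by rw [mul_assoc, ← pow_add, add_comm]
    _ = e2 * u ^ k := h

private lemma aux0 {R : Type*} [CommRing R] {A B : R} (hA : IsUnit A) {x y X Y Δ : ℕ}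
    (h1 : A ^ x = -B ^ y) (h2 : A ^ X = -B ^ Y) (hk : x * Y = X * y + Δ) :
    A ^ Δ = (-1) ^ (y + Y) := by
  have h1' : A ^ (x * Y) = (-1) ^ Y * B ^ (y * Y) := by
    rw [pow_mul, h1, neg_pow, ← pow_mul]
  have h2' : A ^ (X * y) = (-1) ^ y * B ^ (Y * y) := by
    rw [pow_mul, h2, neg_pow, ← pow_mul]
  have key : ((-1 : R) ^ y) * A ^ (X * y + Δ) = ((-1) ^ Y) * A ^ (X * y) := by
    rw [← hk, h1', h2', mul_comm y Y]
    ring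
  have key2 := cancel_pow hA key
  have := congrArg (fun t => ((-1 : R) ^ y) * t) key2
  rw [← mul_assoc, ← pow_add] at this
  rw [Even.neg_one_pow ⟨y, rfl⟩, one_mul] at this
  rw [this, ← pow_add]

private lemma aux1 {R : Type*} [CommRing R] {A B : R} (hA : IsUnit A) {x y X Y Δ : ℕ}
    (h1 : A ^ x = -B ^ y) (h2 : A ^ X = -B ^ Y)
    (hΔ : Δ = ((x:ℤ) * Y - (X:ℤ) * y).natAbs) :
    A ^ Δ = (-1) ^ (y + Y) := by
  rcases le_total (X * y) (x * Y) with h | h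
  · refine aux0 hA h1 h2 ?_
    have h' : (X:ℤ) * y ≤ (x:ℤ) * Y := by exact_mod_cast h
    have : (Δ : ℤ) = (x:ℤ) * Y - (X:ℤ) * y := by
      rw [hΔ, Int.natAbs_of_nonneg (by omega)]
    have := this
    push_cast at this ⊢
    omega
  · have := aux0 hA h2 h1 (Δ := Δ) ?_
    · rw [this, add_comm]
    · have h' : (x:ℤ) * Y ≤ (X:ℤ) * y := by exact_mod_cast h
      have : (Δ : ℤ) = (X:ℤ) * y - (x:ℤ) * Y := by
        rw [hΔ, ← Int.natAbs_neg, Int.natAbs_of_nonneg (by omega)]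
        ring
      push_cast at this ⊢
      omega

private lemma sign_eq {c' : ℕ} (hc'3 : 3 ≤ c') {d e : ℤ} (hd : d = 1 ∨ d = -1)
    (he : e = 1 ∨ e = -1) (hdvd : (c' : ℤ) ∣ d - e) : d = e := by
  by_contra hne
  have h0 : d - e ≠ 0 := fun h => hne (by omega)
  have hle : |d - e| ≤ 2 := by rcases hd with rfl | rfl <;> rcases he with rfl | rfl <;> simp
  have : (c' : ℤ) ≤ |d - e| := Int.le_of_dvd (abs_pos.mpr h0) ((dvd_abs _ _).mpr hdvd)
  have : (3:ℤ) ≤ (c':ℤ) := by exact_mod_cast hc'3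
  omega

private lemma pow_delta_dvd (c z : ℕ) {a b : ℕ} (hac : Nat.Coprime a c)
    {x y X Y Δ : ℕ}
    (hΔ : Δ = ((x:ℤ) * Y - (X:ℤ) * y).natAbs)
    (h1 : ((a : ZMod (c^z)))^x = -((b : ZMod (c^z)))^y)
    (h2 : ((a : ZMod (c^z)))^X = -((b : ZMod (c^z)))^Y) :
    ((c:ℤ))^z ∣ (a:ℤ)^Δ - (-1)^(y+Y) := by
  have hu : IsUnit ((a : ZMod (c^z))) :=
    (ZMod.isUnit_iff_coprime a (c^z)).mpr (hac.pow_right z)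
  have hA := aux1 hu h1 h2 hΔ
  have hcast : (((a:ℤ)^Δ - (-1)^(y+Y) : ℤ) : ZMod (c^z)) = 0 := by
    push_cast
    rw [hA]
    ring
  rw [ZMod.intCast_zmod_eq_zero_iff_dvd] at hcast
  have : ((c^z : ℕ) : ℤ) = (c:ℤ)^z := by push_cast; ring
  rwa [this] at hcast

private lemma letter_dvd (c c' z : ℕ) (hc : 1 < c) (hz : 0 < z) (hz2 : c = 2 → 2 ≤ z)
    (hc' : c' = if c = 2 then 4 else c)
    {a : ℕ} {δ : ℤ} (hδ : δ = 1 ∨ δ = -1)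
    (hmod : (c':ℤ) ∣ (a:ℤ) - δ) {Δ e : ℕ}
    (hdvd0 : ((c:ℤ))^z ∣ (a:ℤ)^Δ - (-1)^e) :
    ((c:ℤ))^z ∣ (a:ℤ)^Δ - δ^Δ := by
  have hc'3 : 3 ≤ c' := by rw [hc']; split <;> omega
  have hc'z : (c':ℤ) ∣ (c:ℤ)^z := by
    rw [hc']; by_cases h2 : c = 2
    · rw [if_pos h2, h2]
      have h4 : ((2:ℤ))^2 ∣ (2:ℤ)^z := pow_dvd_pow 2 (hz2 h2)
      norm_num at h4 ⊢
      exact h4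
    · rw [if_neg h2]; exact_mod_cast dvd_pow_self (c:ℤ) (by omega : z ≠ 0)
  have h1 : (a:ℤ)^Δ ≡ δ^Δ [ZMOD (c':ℤ)] :=
    Int.ModEq.pow Δ (Int.ModEq.symm (Int.modEq_iff_dvd.mpr hmod))
  have h2' : (a:ℤ)^Δ ≡ (-1)^e [ZMOD (c':ℤ)] :=
    ((Int.modEq_iff_dvd.mpr hdvd0).symm).of_dvd hc'z
  have hd1 : δ^Δ = 1 ∨ δ^Δ = -1 := by
    rcases hδ with rfl | rfl
    · left; exact one_pow Δ
    · exact neg_one_pow_eq_or ℤ Δ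
  have hsign : ((-1:ℤ))^e = δ^Δ :=
    sign_eq hc'3 (neg_one_pow_eq_or ℤ e) hd1 (h1.symm.trans h2').dvd
  rw [← hsign]
  exact hdvd0

theorem stmt_9 (a b c : ℕ) (ha : 1 < a) (hb : 1 < b) (hc : 1 < c)
    (hab : Nat.Coprime a b) (hac : Nat.Coprime a c) (hbc : Nat.Coprime b c)
    (c' : ℕ) (hc' : c' = if c = 2 then 4 else c)
    (δa δb : ℤ) (hδa : δa = 1 ∨ δa = -1) (hδb : δb = 1 ∨ δb = -1)
    (hca : (a : ℤ) ≡ δa [ZMOD (c' : ℤ)]) (hcb : (b : ℤ) ≡ δb [ZMOD (c' : ℤ)])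
    (x y z X Y Z : ℕ) (hx : 0 < x) (hy : 0 < y) (hz : 0 < z)
    (hX : 0 < X) (hY : 0 < Y) (hZ : 0 < Z) (hzZ : z ≤ Z)
    (hz2 : c = 2 → 2 ≤ z)
    (heq1 : a ^ x + b ^ y = c ^ z) (heq2 : a ^ X + b ^ Y = c ^ Z)
    (C : ℕ) (hC : C = if 2 < c ∧ c % 4 = 2 then c / 2 else c)
    (Δ : ℕ) (hΔ : Δ = ((x : ℤ) * Y - (X : ℤ) * y).natAbs) (hΔ0 : Δ ≠ 0) :
    (C : ℤ) ^ z ∣ (Int.gcd ((a : ℤ) - δa) ((b : ℤ) - δb) : ℤ) * (Δ : ℤ) := by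
  -- congruences to divisibility
  have hmoda : (c':ℤ) ∣ (a:ℤ) - δa := hca.symm.dvd
  have hmodb : (c':ℤ) ∣ (b:ℤ) - δb := hcb.symm.dvd
  -- ZMod equations
  have e1 : ((a ^ x + b ^ y : ℕ) : ZMod (c ^ z)) = 0 := by
    rw [heq1]; exact_mod_cast ZMod.natCast_self _
  have e2 : ((a ^ X + b ^ Y : ℕ) : ZMod (c ^ z)) = 0 := by
    rw [heq2, ZMod.natCast_eq_zero_iff]; exact pow_dvd_pow c hzZ
  push_cast at e1 e2
  have hA1 : ((a : ZMod (c^z)))^x = -((b : ZMod (c^z)))^y := eq_neg_of_add_eq_zero_left e1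
  have hA2 : ((a : ZMod (c^z)))^X = -((b : ZMod (c^z)))^Y := eq_neg_of_add_eq_zero_left e2
  have hB1 : ((b : ZMod (c^z)))^y = -((a : ZMod (c^z)))^x := by rw [hA1, neg_neg]
  have hB2 : ((b : ZMod (c^z)))^Y = -((a : ZMod (c^z)))^X := by rw [hA2, neg_neg]
  have hΔb : Δ = ((y:ℤ) * X - (Y:ℤ) * x).natAbs := by
    rw [hΔ, ← Int.natAbs_neg]; congr 1; ring
  have hdvda0 := pow_delta_dvd c z hac hΔ hA1 hA2
  have hdvdb0 := pow_delta_dvd c z hbc hΔb hB1 hB2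
  have hdvda : ((c:ℤ))^z ∣ (a:ℤ)^Δ - δa^Δ :=
    letter_dvd c c' z hc hz hz2 hc' hδa hmoda hdvda0
  have hdvdb : ((c:ℤ))^z ∣ (b:ℤ)^Δ - δb^Δ :=
    letter_dvd c c' z hc hz hz2 hc' hδb hmodb hdvdb0
  -- assemble via factorizations
  set da := ((a:ℤ) - δa).natAbs with hda
  set db := ((b:ℤ) - δb).natAbs with hdb
  have hda0 : da ≠ 0 := by
    rw [hda, Int.natAbs_ne_zero]
    have : (2:ℤ) ≤ (a:ℤ) := by exact_mod_cast ha
    rcases hδa with rfl | rfl <;> intro h <;> rw [sub_eq_zero] at h <;> omega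
  have hdb0 : db ≠ 0 := by
    rw [hdb, Int.natAbs_ne_zero]
    have : (2:ℤ) ≤ (b:ℤ) := by exact_mod_cast hb
    rcases hδb with rfl | rfl <;> intro h <;> rw [sub_eq_zero] at h <;> omega
  have hC0 : C ≠ 0 := by rw [hC]; split <;> omega
  have hg0 : Nat.gcd da db ≠ 0 := Nat.gcd_ne_zero_left hda0
  suffices h : C ^ z ∣ Nat.gcd da db * Δ by
    have h2 := Int.natCast_dvd_natCast.mpr h
    push_cast at h2
    exact h2
  rw [← Nat.factorization_le_iff_dvd (pow_ne_zero z hC0) (mul_ne_zero hg0 hΔ0),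
    Finsupp.le_def]
  intro p
  by_cases hp : p.Prime
  swap
  · simp [Nat.factorization_eq_zero_of_not_prime _ hp]
  rw [Nat.factorization_pow, Nat.factorization_mul hg0 hΔ0, Nat.factorization_gcd hda0 hdb0]
  simp only [Finsupp.smul_apply, Finsupp.add_apply, Finsupp.inf_apply, smul_eq_mul]
  have hva := letter_val p hp c c' C z Δ hc hz hΔ0 hc' hC a ha hac δa hδa hmoda hdvda
  have hvb := letter_val p hp c c' C z Δ hc hz hΔ0 hc' hC b hb hbc δb hδb hmodb hdvdb
  rcases min_cases (da.factorization p) (db.factorization p) with ⟨hmin, _⟩ | ⟨hmin, _⟩ <;>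
    rw [hmin] <;> [exact hva; exact hvb]
end

section
/- Let a, b, c be pairwise coprime integers greater than 1 with c even, and suppose (x,y,z) and (X,Y,Z) are two positive-integer solutions of a^x + b^y = c^z with z ≤ Z and Δ := |xY − Xy| ≠ 0. Then (c[2])^z divides gcd(a − δ_{a,4}, b − δ_{b,4}) · Δ, where c[2] = 2^{ν_2(c)} is the 2-part of c, and δ_{a,4}, δ_{b,4} ∈ {1,-1} are determined by a ≡ δ_{a,4} (mod 4), b ≡ δ_{b,4} (mod 4). -/
private lemma aux_lte (u : ℤ) (hu4 : (4:ℤ) ∣ u - 1) (hune : u ≠ 1)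
    (n m : ℕ) (hn : n ≠ 0) (ε : ℤ) (hε : ε = 1 ∨ ε = -1)
    (h : (2:ℤ) ^ m ∣ u ^ n - ε) :
    m ≤ padicValInt 2 (u - 1) + padicValNat 2 n := by
  have hodd : ¬ (2:ℤ) ∣ u := by
    obtain ⟨k, hk⟩ := hu4
    rintro ⟨j, hj⟩
    omega
  rcases hε with rfl | rfl
  · -- main case via LTE
    have lte := Int.two_pow_sub_pow' (x := u) (y := 1) n (by simpa using hu4) hodd
    simp only [one_pow] at lte
    have hne : u ^ n - 1 ≠ 0 := by
      rw [sub_ne_zero]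
      intro hco
      have hdvd : u ∣ (1:ℤ) := hco ▸ dvd_pow_self u hn
      rcases Int.isUnit_iff.mp (isUnit_of_dvd_one hdvd) with h1 | h1
      · exact hune h1
      · obtain ⟨k, hk⟩ := hu4; omega
    have fin1 : FiniteMultiplicity (2:ℤ) (u ^ n - 1) :=
      Int.finiteMultiplicity_iff.2 ⟨by norm_num, hne⟩
    have fin2 : FiniteMultiplicity (2:ℤ) (u - 1) :=
      Int.finiteMultiplicity_iff.2 ⟨by norm_num, sub_ne_zero.2 hune⟩
    have fin3 : FiniteMultiplicity (2:ℤ) (n:ℤ) :=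
      Int.finiteMultiplicity_iff.2 ⟨by norm_num, by exact_mod_cast hn⟩
    have key : (m : ℕ∞) ≤ emultiplicity (2:ℤ) (u ^ n - 1) :=
      pow_dvd_iff_le_emultiplicity.mp h
    rw [lte, fin2.emultiplicity_eq_multiplicity, fin3.emultiplicity_eq_multiplicity] at key
    have e2 : padicValInt 2 (u - 1) = multiplicity (2:ℤ) (u - 1) :=
      padicValInt.of_ne_one_ne_zero (by norm_num) (sub_ne_zero.2 hune)
    have e3 : padicValNat 2 n = multiplicity (2:ℤ) (n:ℤ) := by
      rw [← padicValInt.of_nat]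
      exact padicValInt.of_ne_one_ne_zero (by norm_num) (by exact_mod_cast hn)
    rw [e2, e3]
    exact_mod_cast key
  · -- sign case: modulus forced tiny
    have h' : (2:ℤ) ^ m ∣ u ^ n + 1 := by simpa [sub_neg_eq_add] using h
    have h4n : (4:ℤ) ∣ u ^ n - 1 := by
      have hm' : (4:ℤ) ∣ 1 - u := by simpa [neg_sub] using dvd_neg.mpr hu4
      have hm : u ≡ 1 [ZMOD 4] := Int.modEq_iff_dvd.mpr hm'
      have hpow := Int.ModEq.dvd (hm.pow n)
      simpa [neg_sub] using dvd_neg.mpr hpow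
    have hm1 : m ≤ 1 := by
      by_contra hcon
      push_neg at hcon
      have h4' : (4:ℤ) ∣ u ^ n + 1 := by
        calc (4:ℤ) = 2 ^ 2 := by norm_num
          _ ∣ 2 ^ m := pow_dvd_pow 2 hcon
          _ ∣ u ^ n + 1 := h'
      have : (4:ℤ) ∣ 2 := by
        have := dvd_sub h4' h4n
        simpa using this
      norm_num at this
    have hval : 2 ≤ padicValInt 2 (u - 1) := by
      have h2 : ((2:ℕ):ℤ) ^ 2 ∣ u - 1 := by push_cast; simpa using hu4
      rcases (padicValInt_dvd_iff (p := 2) 2 (u - 1)).mp h2 with h0 | hle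
      · exact absurd (sub_eq_zero.mp h0) hune
      · exact hle
    omega

private lemma aux_cong (n A B : ℤ) (hA : IsCoprime n A)
    (x y X Y Δ : ℕ)
    (h1 : n ∣ A ^ x + B ^ y) (h2 : n ∣ A ^ X + B ^ Y)
    (hd : x * Y = X * y + Δ ∨ X * y = x * Y + Δ) :
    n ∣ A ^ Δ - (-1) ^ (y + Y) := by
  have h1' : n ∣ A ^ (x * Y) - (-1) ^ Y * B ^ (y * Y) := by
    have hstep : (A ^ x - (-(B ^ y))) ∣ (A ^ x) ^ Y - (-(B ^ y)) ^ Y :=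
      sub_dvd_pow_sub_pow _ _ Y
    have hn : n ∣ (A ^ x) ^ Y - (-(B ^ y)) ^ Y :=
      dvd_trans (by simpa [sub_neg_eq_add] using h1) hstep
    have e : (A ^ x) ^ Y - (-(B ^ y)) ^ Y = A ^ (x * Y) - (-1) ^ Y * B ^ (y * Y) := by
      rw [neg_pow, ← pow_mul, ← pow_mul]
    rwa [e] at hn
  have h2' : n ∣ A ^ (X * y) - (-1) ^ y * B ^ (y * Y) := by
    have hstep : (A ^ X - (-(B ^ Y))) ∣ (A ^ X) ^ y - (-(B ^ Y)) ^ y :=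
      sub_dvd_pow_sub_pow _ _ y
    have hn : n ∣ (A ^ X) ^ y - (-(B ^ Y)) ^ y :=
      dvd_trans (by simpa [sub_neg_eq_add] using h2) hstep
    have e : (A ^ X) ^ y - (-(B ^ Y)) ^ y = A ^ (X * y) - (-1) ^ y * B ^ (y * Y) := by
      rw [neg_pow, ← pow_mul, ← pow_mul, mul_comm Y y]
    rwa [e] at hn
  have hc : n ∣ A ^ (x * Y) * (-1) ^ y - A ^ (X * y) * (-1) ^ Y := by
    have := dvd_sub (h1'.mul_left ((-1) ^ y)) (h2'.mul_left ((-1) ^ Y))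
    have e : (-1:ℤ) ^ y * (A ^ (x * Y) - (-1) ^ Y * B ^ (y * Y)) -
        (-1) ^ Y * (A ^ (X * y) - (-1) ^ y * B ^ (y * Y)) =
        A ^ (x * Y) * (-1) ^ y - A ^ (X * y) * (-1) ^ Y := by ring
    rwa [e] at this
  have h11y : ((-1:ℤ)) ^ y * (-1) ^ y = 1 := by
    rw [← pow_add]; exact Even.neg_one_pow ⟨y, rfl⟩
  have h11Y : ((-1:ℤ)) ^ Y * (-1) ^ Y = 1 := by
    rw [← pow_add]; exact Even.neg_one_pow ⟨Y, rfl⟩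
  rcases hd with h | h
  · rw [h, pow_add] at hc
    have hc2 : n ∣ A ^ Δ * (-1) ^ y - (-1) ^ Y := by
      have hmul : n ∣ (A ^ Δ * (-1) ^ y - (-1) ^ Y) * A ^ (X * y) := by
        have e : A ^ (X * y) * A ^ Δ * (-1) ^ y - A ^ (X * y) * (-1) ^ Y =
            (A ^ Δ * (-1) ^ y - (-1) ^ Y) * A ^ (X * y) := by ring
        rwa [e] at hc
      exact (hA.pow_right).dvd_of_dvd_mul_right hmul
    have e : A ^ Δ - (-1) ^ (y + Y) = (A ^ Δ * (-1) ^ y - (-1) ^ Y) * (-1) ^ y := by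
      rw [pow_add]; linear_combination (-(A ^ Δ)) * h11y
    rw [e]; exact hc2.mul_right _
  · rw [h, pow_add] at hc
    have hc2 : n ∣ (-1) ^ y - A ^ Δ * (-1) ^ Y := by
      have hmul : n ∣ ((-1) ^ y - A ^ Δ * (-1) ^ Y) * A ^ (x * Y) := by
        have e : A ^ (x * Y) * (-1) ^ y - A ^ (x * Y) * A ^ Δ * (-1) ^ Y =
            ((-1) ^ y - A ^ Δ * (-1) ^ Y) * A ^ (x * Y) := by ring
        rwa [e] at hc
      exact (hA.pow_right).dvd_of_dvd_mul_right hmul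
    have e : A ^ Δ - (-1) ^ (y + Y) = ((-1) ^ y - A ^ Δ * (-1) ^ Y) * (-(-1) ^ Y) := by
      rw [pow_add]; linear_combination (-(A ^ Δ)) * h11Y
    rw [e]; exact hc2.mul_right _

theorem stmt_10 (a b c : ℕ) (ha : 1 < a) (hb : 1 < b) (hc : 1 < c)
    (hab : Nat.Coprime a b) (hac : Nat.Coprime a c) (hbc : Nat.Coprime b c)
    (hceven : Even c)
    (δa4 δb4 : ℤ) (hδa4 : δa4 = 1 ∨ δa4 = -1) (hδb4 : δb4 = 1 ∨ δb4 = -1)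
    (hca : (a : ℤ) ≡ δa4 [ZMOD 4]) (hcb : (b : ℤ) ≡ δb4 [ZMOD 4])
    (x y z X Y Z : ℕ) (hx : 0 < x) (hy : 0 < y) (hz : 0 < z)
    (hX : 0 < X) (hY : 0 < Y) (hZ : 0 < Z) (hzZ : z ≤ Z)
    (heq1 : a ^ x + b ^ y = c ^ z) (heq2 : a ^ X + b ^ Y = c ^ Z)
    (Δ : ℕ) (hΔ : Δ = ((x : ℤ) * Y - (X : ℤ) * y).natAbs) (hΔ0 : Δ ≠ 0) :
    ((2 ^ padicValNat 2 c : ℕ) : ℤ) ^ z ∣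
      (Int.gcd ((a : ℤ) - δa4) ((b : ℤ) - δb4) : ℤ) * (Δ : ℤ) := by
  set v := padicValNat 2 c with hv
  set m := v * z with hm
  -- 2 | c
  have hc2 : 2 ∣ c := hceven.two_dvd
  -- oddness of a, b
  have hao : ¬ 2 ∣ a := fun h => by
    have := Nat.dvd_gcd h hc2
    rw [Nat.Coprime.gcd_eq_one hac] at this
    omega
  have hbo : ¬ 2 ∣ b := fun h => by
    have := Nat.dvd_gcd h hc2
    rw [Nat.Coprime.gcd_eq_one hbc] at this
    omega
  -- modulus divides c^z and c^Z
  have hdvdc : (2:ℤ) ^ v ∣ (c:ℤ) := by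
    exact_mod_cast Int.natCast_dvd_natCast.2 (pow_padicValNat_dvd (p := 2) (n := c))
  have hMz : (2:ℤ) ^ m ∣ (c:ℤ) ^ z := by
    rw [hm, pow_mul]
    exact pow_dvd_pow_of_dvd hdvdc z
  have hMZ : (2:ℤ) ^ m ∣ (c:ℤ) ^ Z := by
    calc (2:ℤ) ^ m ∣ (2:ℤ) ^ (v * Z) := pow_dvd_pow 2 (Nat.mul_le_mul_left v hzZ)
      _ = ((2:ℤ) ^ v) ^ Z := by rw [pow_mul]
      _ ∣ (c:ℤ) ^ Z := pow_dvd_pow_of_dvd hdvdc Z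
  have h1 : (2:ℤ) ^ m ∣ (a:ℤ) ^ x + (b:ℤ) ^ y := by
    have : ((a:ℤ)) ^ x + (b:ℤ) ^ y = (c:ℤ) ^ z := by exact_mod_cast heq1
    rw [this]; exact hMz
  have h2 : (2:ℤ) ^ m ∣ (a:ℤ) ^ X + (b:ℤ) ^ Y := by
    have : ((a:ℤ)) ^ X + (b:ℤ) ^ Y = (c:ℤ) ^ Z := by exact_mod_cast heq2
    rw [this]; exact hMZ
  -- coprimality of modulus with a and b
  have hcopa : IsCoprime ((2:ℤ) ^ m) (a:ℤ) := by
    apply IsCoprime.pow_left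
    have hnd : ¬ (2:ℤ) ∣ (a:ℤ) := by exact_mod_cast hao
    exact (Int.prime_two.coprime_iff_not_dvd).mpr hnd
  have hcopb : IsCoprime ((2:ℤ) ^ m) (b:ℤ) := by
    apply IsCoprime.pow_left
    have hnd : ¬ (2:ℤ) ∣ (b:ℤ) := by exact_mod_cast hbo
    exact (Int.prime_two.coprime_iff_not_dvd).mpr hnd
  -- the exponent relation
  have hd : x * Y = X * y + Δ ∨ X * y = x * Y + Δ := by
    have habs : (Δ : ℤ) = |(x : ℤ) * Y - (X : ℤ) * y| := by
      rw [hΔ]; exact (Int.abs_eq_natAbs _).symm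
    have hpq : ((x * Y : ℕ) : ℤ) = (x:ℤ) * Y := by push_cast; ring
    have hpq' : ((X * y : ℕ) : ℤ) = (X:ℤ) * y := by push_cast; ring
    rcases le_total (X * y) (x * Y) with h | h
    · left
      have hle : ((X * y : ℕ) : ℤ) ≤ ((x * Y : ℕ) : ℤ) := by exact_mod_cast h
      rw [hpq, hpq'] at hle
      rw [abs_of_nonneg (by linarith)] at habs
      have : ((x * Y : ℕ) : ℤ) = ((X * y : ℕ) : ℤ) + (Δ : ℤ) := by
        rw [hpq, hpq']; linarith
      exact_mod_cast this
    · right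
      have hle : ((x * Y : ℕ) : ℤ) ≤ ((X * y : ℕ) : ℤ) := by exact_mod_cast h
      rw [hpq, hpq'] at hle
      rw [abs_of_nonpos (by linarith)] at habs
      have : ((X * y : ℕ) : ℤ) = ((x * Y : ℕ) : ℤ) + (Δ : ℤ) := by
        rw [hpq, hpq']; linarith
      exact_mod_cast this
  have hd' : y * X = Y * x + Δ ∨ Y * x = y * X + Δ := by
    rcases hd with h | h
    · right; rw [mul_comm Y x, mul_comm y X]; exact h
    · left; rw [mul_comm y X, mul_comm Y x]; exact h
  -- congruences a^Δ ≡ ±1, b^Δ ≡ ±1 mod 2^m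
  have hconga : (2:ℤ) ^ m ∣ (a:ℤ) ^ Δ - (-1) ^ (y + Y) :=
    aux_cong _ _ _ hcopa x y X Y Δ h1 h2 hd
  have hcongb : (2:ℤ) ^ m ∣ (b:ℤ) ^ Δ - (-1) ^ (x + X) :=
    aux_cong ((2:ℤ) ^ m) (b:ℤ) (a:ℤ) hcopb y x Y X Δ
      (by rwa [add_comm] at h1) (by rwa [add_comm] at h2) hd'
  -- set up u_a = δa4 * a, u_b = δb4 * b
  have hsqa : δa4 * δa4 = 1 := by rcases hδa4 with h | h <;> simp [h]
  have hsqb : δb4 * δb4 = 1 := by rcases hδb4 with h | h <;> simp [h]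
  have hua4 : (4:ℤ) ∣ δa4 * (a:ℤ) - 1 := by
    have hdv : (4:ℤ) ∣ δa4 - (a:ℤ) := Int.ModEq.dvd hca
    have e : δa4 * (a:ℤ) - 1 = (-δa4) * (δa4 - (a:ℤ)) + (δa4 * δa4 - 1) := by ring
    rw [e, hsqa, sub_self, add_zero]
    exact hdv.mul_left _
  have hub4 : (4:ℤ) ∣ δb4 * (b:ℤ) - 1 := by
    have hdv : (4:ℤ) ∣ δb4 - (b:ℤ) := Int.ModEq.dvd hcb
    have e : δb4 * (b:ℤ) - 1 = (-δb4) * (δb4 - (b:ℤ)) + (δb4 * δb4 - 1) := by ring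
    rw [e, hsqb, sub_self, add_zero]
    exact hdv.mul_left _
  have ha2 : (2:ℤ) ≤ (a:ℤ) := by exact_mod_cast ha
  have hb2 : (2:ℤ) ≤ (b:ℤ) := by exact_mod_cast hb
  have huane : δa4 * (a:ℤ) ≠ 1 := by rcases hδa4 with h | h <;> subst h <;> intro hx <;> omega
  have hubne : δb4 * (b:ℤ) ≠ 1 := by rcases hδb4 with h | h <;> subst h <;> intro hx <;> omega
  -- sign values
  have hsgn : ∀ k : ℕ, ((-1:ℤ)) ^ k = 1 ∨ ((-1:ℤ)) ^ k = -1 := fun k =>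
    (Nat.even_or_odd k).elim (fun h => Or.inl h.neg_one_pow) (fun h => Or.inr h.neg_one_pow)
  have hεa : δa4 ^ Δ * (-1) ^ (y + Y) = 1 ∨ δa4 ^ Δ * (-1) ^ (y + Y) = -1 := by
    rcases hδa4 with h | h <;> subst h <;>
      rcases hsgn Δ with h' | h' <;> rcases hsgn (y + Y) with h'' | h'' <;>
      simp only [one_pow, h', h''] <;> norm_num
  have hεb : δb4 ^ Δ * (-1) ^ (x + X) = 1 ∨ δb4 ^ Δ * (-1) ^ (x + X) = -1 := by
    rcases hδb4 with h | h <;> subst h <;>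
      rcases hsgn Δ with h' | h' <;> rcases hsgn (x + X) with h'' | h'' <;>
      simp only [one_pow, h', h''] <;> norm_num
  -- divisibility for u^Δ - ε
  have hdua : (2:ℤ) ^ m ∣ (δa4 * (a:ℤ)) ^ Δ - δa4 ^ Δ * (-1) ^ (y + Y) := by
    have e : (δa4 * (a:ℤ)) ^ Δ - δa4 ^ Δ * (-1) ^ (y + Y) =
        δa4 ^ Δ * ((a:ℤ) ^ Δ - (-1) ^ (y + Y)) := by rw [mul_pow]; ring
    rw [e]; exact hconga.mul_left _
  have hdub : (2:ℤ) ^ m ∣ (δb4 * (b:ℤ)) ^ Δ - δb4 ^ Δ * (-1) ^ (x + X) := by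
    have e : (δb4 * (b:ℤ)) ^ Δ - δb4 ^ Δ * (-1) ^ (x + X) =
        δb4 ^ Δ * ((b:ℤ) ^ Δ - (-1) ^ (x + X)) := by rw [mul_pow]; ring
    rw [e]; exact hcongb.mul_left _
  -- apply LTE bound
  set wa := padicValInt 2 (δa4 * (a:ℤ) - 1) with hwa
  set wb := padicValInt 2 (δb4 * (b:ℤ) - 1) with hwb
  set vΔ := padicValNat 2 Δ with hvΔ
  have hba : m ≤ wa + vΔ := aux_lte _ hua4 huane Δ m hΔ0 _ hεa hdua
  have hbb : m ≤ wb + vΔ := aux_lte _ hub4 hubne Δ m hΔ0 _ hεb hdub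
  -- divisibility pieces
  have hdva : (2:ℤ) ^ wa ∣ (a:ℤ) - δa4 := by
    have h1' : (2:ℤ) ^ wa ∣ δa4 * (a:ℤ) - 1 := by
      have := padicValInt_dvd (p := 2) (δa4 * (a:ℤ) - 1)
      simpa using this
    have e : (a:ℤ) - δa4 = δa4 * (δa4 * (a:ℤ) - 1) := by
      linear_combination (-(a:ℤ)) * hsqa
    rw [e]; exact h1'.mul_left _
  have hdvb : (2:ℤ) ^ wb ∣ (b:ℤ) - δb4 := by
    have h1' : (2:ℤ) ^ wb ∣ δb4 * (b:ℤ) - 1 := by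
      have := padicValInt_dvd (p := 2) (δb4 * (b:ℤ) - 1)
      simpa using this
    have e : (b:ℤ) - δb4 = δb4 * (δb4 * (b:ℤ) - 1) := by
      linear_combination (-(b:ℤ)) * hsqb
    rw [e]; exact h1'.mul_left _
  have hgcd : (2:ℤ) ^ (min wa wb) ∣ (Int.gcd ((a:ℤ) - δa4) ((b:ℤ) - δb4) : ℤ) :=
    Int.dvd_coe_gcd ((pow_dvd_pow 2 (min_le_left _ _)).trans hdva)
      ((pow_dvd_pow 2 (min_le_right _ _)).trans hdvb)
  have hdΔ : (2:ℤ) ^ vΔ ∣ (Δ:ℤ) := by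
    exact_mod_cast Int.natCast_dvd_natCast.2 (pow_padicValNat_dvd (p := 2) (n := Δ))
  have hfinal : (2:ℤ) ^ m ∣ (Int.gcd ((a:ℤ) - δa4) ((b:ℤ) - δb4) : ℤ) * (Δ:ℤ) := by
    calc (2:ℤ) ^ m ∣ (2:ℤ) ^ (min wa wb + vΔ) := pow_dvd_pow 2 (by omega)
      _ = (2:ℤ) ^ (min wa wb) * (2:ℤ) ^ vΔ := pow_add 2 _ _
      _ ∣ _ := mul_dvd_mul hgcd hdΔ
  have e : ((2 ^ v : ℕ) : ℤ) ^ z = (2:ℤ) ^ m := by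
    rw [hm, pow_mul]; push_cast; ring
  rw [e]
  exact hfinal
end

section
/- Let b, c be coprime integers greater than 1 and z < Z positive integers satisfying b^Y − b = c^Z − c^z for some integer Y ≥ 3 with Y = 3, where additionally 2z > Z. Writing b^2 = 1 + K·c^z with K a positive integer, we have b·K = c^{Z−z} − 1 and K^2 ≡ 1 (mod c^{Z−z}). -/
theorem stmt_11 (b c : ℕ) (hb : 1 < b) (hc : 1 < c) (hbc : Nat.Coprime b c)
    (z Z : ℕ) (hz : 0 < z) (hzZ : z < Z) (hZ2z : Z < 2 * z)
    (heq : b * (b ^ 2 - 1) = c ^ z * (c ^ (Z - z) - 1))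
    (K : ℕ) (hK : 0 < K) (hKdef : b ^ 2 = 1 + K * c ^ z) :
    b * K = c ^ (Z - z) - 1 ∧ (K : ℤ) ^ 2 ≡ 1 [ZMOD ((c : ℤ) ^ (Z - z))] := by
  have hsub : b ^ 2 - 1 = K * c ^ z := by omega
  rw [hsub] at heq
  have hcz : 0 < c ^ z := pow_pos (by omega) z
  have h1 : b * K = c ^ (Z - z) - 1 := by
    apply Nat.eq_of_mul_eq_mul_right hcz
    rw [mul_assoc, heq, mul_comm]
  refine ⟨h1, ?_⟩
  have hge : 1 ≤ c ^ (Z - z) := Nat.one_le_pow _ _ (by omega)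
  have h2 : (b : ℤ) * K = (c : ℤ) ^ (Z - z) - 1 := by
    zify [hge] at h1; exact_mod_cast h1
  have hdvd : ((c : ℤ) ^ (Z - z)) ∣ ((c : ℤ) ^ z) := pow_dvd_pow _ (by omega)
  have hb2 : (b : ℤ) ^ 2 ≡ 1 [ZMOD ((c : ℤ) ^ (Z - z))] := by
    have hk : (b : ℤ) ^ 2 = 1 + K * c ^ z := by exact_mod_cast hKdef
    refine (Int.modEq_iff_dvd.mpr ?_).symm
    have h3 : ((b : ℤ) ^ 2 - 1) = K * c ^ z := by rw [hk]; ring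
    rw [h3]
    exact hdvd.mul_left K
  have hbK : (b : ℤ) * K ≡ -1 [ZMOD ((c : ℤ) ^ (Z - z))] := by
    refine Int.modEq_iff_dvd.mpr ?_
    rw [h2]
    have h4 : (-1 : ℤ) - ((c : ℤ) ^ (Z - z) - 1) = -((c : ℤ) ^ (Z - z)) := by ring
    rw [h4]; exact dvd_neg.mpr dvd_rfl
  have e1 : ((b : ℤ) * K) ^ 2 ≡ (-1 : ℤ) ^ 2 [ZMOD ((c : ℤ) ^ (Z - z))] := hbK.pow 2
  have e2 : (b : ℤ) ^ 2 * (K : ℤ) ^ 2 ≡ 1 [ZMOD ((c : ℤ) ^ (Z - z))] := by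
    simpa [mul_pow] using e1
  calc (K : ℤ) ^ 2 = 1 * (K : ℤ) ^ 2 := (one_mul _).symm
    _ ≡ (b : ℤ) ^ 2 * (K : ℤ) ^ 2 [ZMOD ((c : ℤ) ^ (Z - z))] := hb2.symm.mul_right _
    _ ≡ 1 [ZMOD ((c : ℤ) ^ (Z - z))] := e2
end

section
/- Let a, b, c be pairwise coprime integers greater than 1 and z, Z positive integers with Z ≥ 2z. Suppose a = A·D + δ and b = B·D − δ where δ ∈ {1,-1}, D > 2 is a divisor of c^z, and A, B are positive integers with A + B = c^z / D. If a^X + b^Y = c^Z for positive integers X, Y with δ^X = −(−δ)^Y, then D divides A·X + B·Y; in particular A·X + B·Y ≥ D, and hence D^2 / c^z ≤ max{X, Y}. -/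
lemma aux_pow_mod_sq (d e u : ℤ) (he : e ^ 2 = 1) :
    ∀ n : ℕ, d ^ 2 ∣ (u * d + e) ^ n - (e ^ n + n * u * e ^ (n + 1) * d) := by
  intro n
  induction n with
  | zero => simp
  | succ n ih =>
    obtain ⟨k, hk⟩ := ih
    refine ⟨k * (u * d + e) + n * u ^ 2 * e ^ (n + 1), ?_⟩
    push_cast
    linear_combination (u * d + e) * hk - u * d * e ^ n * he

theorem stmt_12 (a b c : ℕ) (ha : 1 < a) (hb : 1 < b) (hc : 1 < c)
    (hab : Nat.Coprime a b) (hac : Nat.Coprime a c) (hbc : Nat.Coprime b c)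
    (z Z : ℕ) (hz : 0 < z) (hZ : 0 < Z) (hZ2z : 2 * z ≤ Z)
    (δ : ℤ) (hδ : δ = 1 ∨ δ = -1)
    (D : ℕ) (hD2 : 2 < D) (hDdvd : D ∣ c ^ z)
    (A B : ℕ) (hA : 0 < A) (hB : 0 < B)
    (haform : (a : ℤ) = A * D + δ) (hbform : (b : ℤ) = B * D - δ)
    (hAB : A + B = c ^ z / D)
    (X Y : ℕ) (hX : 0 < X) (hY : 0 < Y)
    (heq : a ^ X + b ^ Y = c ^ Z)
    (hpar : δ ^ X + (-δ) ^ Y = 0) :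
    D ∣ A * X + B * Y ∧ D ≤ A * X + B * Y ∧ D ^ 2 ≤ max X Y * c ^ z := by
  have hδ2 : δ ^ 2 = 1 := by rcases hδ with h | h <;> simp [h]
  have hδ2' : (-δ) ^ 2 = 1 := by rcases hδ with h | h <;> simp [h]
  have ha' : (a : ℤ) = (A : ℤ) * D + δ := haform
  have hb' : (b : ℤ) = (B : ℤ) * D + (-δ) := by rw [hbform]; ring
  have h1 := aux_pow_mod_sq (D : ℤ) δ (A : ℤ) hδ2 X
  have h2 := aux_pow_mod_sq (D : ℤ) (-δ) (B : ℤ) hδ2' Y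
  rw [← ha'] at h1
  rw [← hb'] at h2
  -- D^2 ∣ c^Z
  have hD2c : (D : ℤ) ^ 2 ∣ (c : ℤ) ^ Z := by
    have : (D : ℕ) ^ 2 ∣ c ^ Z := by
      calc D ^ 2 ∣ (c ^ z) ^ 2 := pow_dvd_pow_of_dvd hDdvd 2
        _ = c ^ (2 * z) := by ring
        _ ∣ c ^ Z := pow_dvd_pow c hZ2z
    exact_mod_cast this
  have heqZ : (a : ℤ) ^ X + (b : ℤ) ^ Y = (c : ℤ) ^ Z := by exact_mod_cast heq
  -- combine
  have hsum : (D : ℤ) ^ 2 ∣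
      ((c : ℤ) ^ Z - ((δ ^ X + (-δ) ^ Y) +
        ((X : ℤ) * A * δ ^ (X + 1) + (Y : ℤ) * B * (-δ) ^ (Y + 1)) * D)) := by
    have := dvd_add h1 h2
    have h3 : (a : ℤ) ^ X - (δ ^ X + X * A * δ ^ (X + 1) * D) +
        ((b : ℤ) ^ Y - ((-δ) ^ Y + Y * B * (-δ) ^ (Y + 1) * D)) =
        (c : ℤ) ^ Z - ((δ ^ X + (-δ) ^ Y) +
          ((X : ℤ) * A * δ ^ (X + 1) + (Y : ℤ) * B * (-δ) ^ (Y + 1)) * D) := by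
      rw [← heqZ]; ring
    rwa [h3] at this
  rw [hpar] at hsum
  have hsum2 : (D : ℤ) ^ 2 ∣
      ((X : ℤ) * A * δ ^ (X + 1) + (Y : ℤ) * B * (-δ) ^ (Y + 1)) * D := by
    simpa using dvd_sub hD2c hsum
  have hDpos : (0 : ℤ) < D := by exact_mod_cast (by omega : 0 < D)
  have hdvd1 : (D : ℤ) ∣ (X : ℤ) * A * δ ^ (X + 1) + (Y : ℤ) * B * (-δ) ^ (Y + 1) := by
    have := hsum2
    rw [pow_two] at this
    exact (mul_dvd_mul_iff_right hDpos.ne').mp (by rwa [mul_comm (D:ℤ) (D:ℤ)] at this)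
  -- simplify the unit factors
  have hpY : (-δ) ^ Y = -δ ^ X := by linarith [hpar]
  have hkey : (X : ℤ) * A * δ ^ (X + 1) + (Y : ℤ) * B * (-δ) ^ (Y + 1) =
      (δ ^ X * δ) * ((A : ℤ) * X + B * Y) := by
    have e1 : δ ^ (X + 1) = δ ^ X * δ := by ring
    have e2 : (-δ) ^ (Y + 1) = (-δ) ^ Y * (-δ) := by ring
    rw [e1, e2, hpY]; ring
  rw [hkey] at hdvd1
  have hunit : (δ ^ X * δ) * (δ ^ X * δ) = 1 := by
    have h : (δ ^ X * δ) * (δ ^ X * δ) = (δ ^ 2) ^ (X + 1) := by ring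
    rw [h, hδ2, one_pow]
  have hdvd2 : (D : ℤ) ∣ ((A : ℤ) * X + B * Y) := by
    have := hdvd1.mul_left (δ ^ X * δ)
    rwa [← mul_assoc, hunit, one_mul] at this
  have hdvdN : D ∣ A * X + B * Y := by exact_mod_cast hdvd2
  have hposN : 0 < A * X + B * Y := by positivity
  have hle : D ≤ A * X + B * Y := Nat.le_of_dvd hposN hdvdN
  refine ⟨hdvdN, hle, ?_⟩
  have hM : A * X + B * Y ≤ (A + B) * max X Y := by
    rw [Nat.add_mul]
    exact Nat.add_le_add (Nat.mul_le_mul_left A (le_max_left X Y))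
      (Nat.mul_le_mul_left B (le_max_right X Y))
  have hABD : (A + B) * D = c ^ z := by
    rw [hAB, Nat.div_mul_cancel hDdvd]
  calc D ^ 2 = D * D := sq D
    _ ≤ (A * X + B * Y) * D := Nat.mul_le_mul_right D hle
    _ ≤ ((A + B) * max X Y) * D := Nat.mul_le_mul_right D hM
    _ = max X Y * ((A + B) * D) := by ring
    _ = max X Y * c ^ z := by rw [hABD]
end

section
/- Let c be a prime of the form m^2 + 1 with m even, and set β = m + i in the Gaussian integers. Suppose a, b are coprime positive integers with a odd and b even, and a^2 + b^2 = c^Z for a positive integer Z. Then a = |β^Z + (−β̄)^Z| / 2 and b = |β^Z − (−β̄)^Z| / 2, where β̄ = m − i. -/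
open Complex Zsqrtd

local notation "ℤ[i]" => GaussianInt

set_option synthInstance.maxHeartbeats 1000000 in
lemma gi_prime_of_norm_prime (x : ℤ[i]) (h : (Zsqrtd.norm x).natAbs.Prime) : Prime x := by
  rw [← irreducible_iff_prime]
  refine ⟨fun hu => ?_, fun s t hst => ?_⟩
  · rw [← Zsqrtd.norm_eq_one_iff] at hu
    rw [hu] at h
    exact Nat.not_prime_one h
  · have hn : ((Zsqrtd.norm s).natAbs * (Zsqrtd.norm t).natAbs).Prime := by
      rw [← Int.natAbs_mul, ← Zsqrtd.norm_mul, ← hst]; exact h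
    rcases Nat.prime_mul_iff.mp hn with ⟨_, ht⟩ | ⟨_, hs⟩
    · exact Or.inr (Zsqrtd.norm_eq_one_iff.mp ht)
    · exact Or.inl (Zsqrtd.norm_eq_one_iff.mp hs)

lemma gi_units (u : ℤ[i]) (hu : IsUnit u) :
    u = 1 ∨ u = -1 ∨ u = ⟨0, 1⟩ ∨ u = ⟨0, -1⟩ := by
  have h1 : Zsqrtd.norm u = 1 := (Zsqrtd.norm_eq_one_iff' (by norm_num) u).mpr hu
  obtain ⟨r, s⟩ := u
  have h2 : r * r + s * s = 1 := by
    simp [Zsqrtd.norm] at h1; linarith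
  have hr1 : -1 ≤ r := by nlinarith
  have hr2 : r ≤ 1 := by nlinarith
  have hs1 : -1 ≤ s := by nlinarith
  have hs2 : s ≤ 1 := by nlinarith
  interval_cases r <;> interval_cases s <;>
    simp_all [Zsqrtd.ext_iff]

lemma gi_parity (m : ℤ) (hm : Even m) (Z : ℕ) :
    (Even (((⟨m, 1⟩ : ℤ[i]) ^ Z).re) ↔ Odd Z) ∧
    (Even (((⟨m, 1⟩ : ℤ[i]) ^ Z).im) ↔ Even Z) := by
  induction Z with
  | zero => simp
  | succ n ih =>
    obtain ⟨ih1, ih2⟩ := ih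
    set X := ((⟨m, 1⟩ : ℤ[i]) ^ n).re
    set Y := ((⟨m, 1⟩ : ℤ[i]) ^ n).im
    have hre : ((⟨m, 1⟩ : ℤ[i]) ^ (n+1)).re = X * m - Y := by
      rw [pow_succ, Zsqrtd.re_mul]; ring
    have him : ((⟨m, 1⟩ : ℤ[i]) ^ (n+1)).im = X + Y * m := by
      rw [pow_succ, Zsqrtd.im_mul]; ring
    have e1 : Even (X * m) := hm.mul_left X
    have e2 : Even (Y * m) := hm.mul_left Y
    constructor
    · have key : Even (X * m - Y) ↔ Even Y := by
        rw [Int.even_sub]; simp [e1]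
      rw [hre, key, ih2, Nat.odd_add_one, Nat.not_odd_iff_even]
    · have key : Even (X + Y * m) ↔ Even X := by
        rw [Int.even_add]; simp [e2]
      rw [him, key, ih1, Nat.even_add_one, Nat.not_even_iff_odd]

lemma gi_norm_pow (q : ℤ[i]) (n : ℕ) : Zsqrtd.norm (q ^ n) = (Zsqrtd.norm q) ^ n := by
  induction n with
  | zero => simp
  | succ k ih => rw [pow_succ, pow_succ, Zsqrtd.norm_mul, ih]

lemma gi_abs_re (x : ℤ) : ‖GaussianInt.toComplex ⟨x, 0⟩‖ = (x.natAbs : ℝ) := by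
  rw [GaussianInt.toComplex_def']
  simp [Nat.cast_natAbs]

lemma gi_abs_im (y : ℤ) : ‖GaussianInt.toComplex ⟨0, y⟩‖ = (y.natAbs : ℝ) := by
  rw [GaussianInt.toComplex_def']
  simp [Nat.cast_natAbs]

theorem stmt_13 (m : ℕ) (hm : Even m) (c : ℕ) (hc : c = m ^ 2 + 1)
    (hcp : c.Prime)
    (a b : ℕ) (ha : 0 < a) (hb : 0 < b) (hab : Nat.Coprime a b)
    (haodd : Odd a) (hbeven : Even b)
    (Z : ℕ) (hZ : 0 < Z) (heq : a ^ 2 + b ^ 2 = c ^ Z)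
    (β : ℂ) (hβ : β = (m : ℂ) + I) :
    (a : ℝ) = ‖β ^ Z + (-(starRingEnd ℂ β)) ^ Z‖ / 2 ∧
    (b : ℝ) = ‖β ^ Z - (-(starRingEnd ℂ β)) ^ Z‖ / 2 := by
  -- basic facts
  have hm0 : m ≠ 0 := by rintro rfl; simp [hc] at hcp; exact Nat.not_prime_one hcp
  have hm2 : (2 : ℤ) ≤ (m : ℤ) := by
    obtain ⟨k, hk⟩ := hm; omega
  set p : ℤ[i] := ⟨(m : ℤ), 1⟩ with hpdef
  have hnp : Zsqrtd.norm p = (c : ℤ) := by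
    simp [Zsqrtd.norm, hpdef, hc]; push_cast; ring
  have hp : Prime p := by
    apply gi_prime_of_norm_prime
    rw [hnp]; simpa using hcp
  have hps : Prime (star p) := by
    apply gi_prime_of_norm_prime
    rw [Zsqrtd.norm_conj, hnp]; simpa using hcp
  set w : ℤ[i] := ⟨(a : ℤ), (b : ℤ)⟩ with hwdef
  have hnw : Zsqrtd.norm w = (c : ℤ) ^ Z := by
    simp [Zsqrtd.norm, hwdef]
    push_cast
    have : a * a + b * b = c ^ Z := by rw [← heq]; ring
    exact_mod_cast this
  have hcz : ((c : ℤ) : ℤ[i]) = p * star p := by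
    rw [← hnp, Zsqrtd.norm_eq_mul_conj]
  have hwsw : w * star w = p ^ Z * (star p) ^ Z := by
    rw [← Zsqrtd.norm_eq_mul_conj, hnw, ← mul_pow, ← hcz]
    push_cast; ring
  have hpnsp : ¬ p ∣ star p := by
    rintro ⟨t, ht⟩
    have hnt : Zsqrtd.norm t = 1 := by
      have h := congrArg Zsqrtd.norm ht
      rw [Zsqrtd.norm_conj, Zsqrtd.norm_mul, hnp] at h
      have hc0 : (c : ℤ) ≠ 0 := by exact_mod_cast hcp.pos.ne'
      exact (mul_left_cancel₀ hc0 (by linarith)).symm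
    have hut : IsUnit t := (Zsqrtd.norm_eq_one_iff' (by norm_num) t).mp hnt
    rcases gi_units t hut with rfl | rfl | rfl | rfl <;>
      (rw [Zsqrtd.ext_iff] at ht
       simp [hpdef, Zsqrtd.re_mul, Zsqrtd.im_mul, Zsqrtd.re_star, Zsqrtd.im_star] at ht <;> omega)
  have hnotboth : ¬ (p ∣ w ∧ star p ∣ w) := by
    rintro ⟨h1, t, ht⟩
    have hpt : p ∣ t := by
      rcases hp.dvd_or_dvd (ht ▸ h1) with h | h
      · exact absurd h hpnsp
      · exact h
    obtain ⟨s, rfl⟩ := hpt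
    have hcw : ((c : ℤ) : ℤ[i]) ∣ w := by
      rw [hcz]; exact ⟨s, by rw [ht]; ring⟩
    rw [Zsqrtd.intCast_dvd] at hcw
    obtain ⟨hca, hcb⟩ := hcw
    simp only [hwdef] at hca hcb
    rw [Int.natCast_dvd_natCast] at hca hcb
    have := Nat.dvd_gcd hca hcb
    rw [hab] at this
    exact Nat.Prime.one_lt hcp |>.ne' (Nat.eq_one_of_dvd_one this ▸ rfl)
  -- factorization of w
  have hunit_of : ∀ q t : ℤ[i], Zsqrtd.norm q = (c : ℤ) ^ Z → w = q * t → IsUnit t := by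
    intro q t hq hwt
    have h := congrArg Zsqrtd.norm hwt
    rw [Zsqrtd.norm_mul, hq, hnw] at h
    have hc0 : ((c : ℤ)) ^ Z ≠ 0 := pow_ne_zero _ (by exact_mod_cast hcp.pos.ne')
    have hnt : Zsqrtd.norm t = 1 := (mul_left_cancel₀ hc0 (by linarith)).symm
    exact (Zsqrtd.norm_eq_one_iff' (by norm_num) t).mp hnt
  have hnpz : Zsqrtd.norm (p ^ Z) = (c : ℤ) ^ Z := by rw [gi_norm_pow, hnp]
  have hmain : ∃ u : ℤ[i], IsUnit u ∧ (w = p ^ Z * u ∨ w = star (p ^ Z) * u) := by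
    by_cases hpw : p ∣ w
    · have hspw : ¬ star p ∣ w := fun h => hnotboth ⟨hpw, h⟩
      have hdvd : (star p) ^ Z ∣ star w :=
        hps.pow_dvd_of_dvd_mul_left Z hspw (by rw [hwsw]; exact dvd_mul_left _ _)
      obtain ⟨t, ht⟩ := hdvd
      have hw : w = p ^ Z * star t := by
        have h2 := congrArg star ht
        rwa [star_star, star_mul', star_pow, star_star] at h2
      exact ⟨star t, hunit_of _ _ hnpz hw, Or.inl hw⟩
    · have hdvd : p ^ Z ∣ star w :=
        hp.pow_dvd_of_dvd_mul_left Z hpw (by rw [hwsw]; exact dvd_mul_right _ _)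
      obtain ⟨t, ht⟩ := hdvd
      have hw : w = star (p ^ Z) * star t := by
        have h2 := congrArg star ht
        rwa [star_star, star_mul'] at h2
      exact ⟨star t, hunit_of _ _ (by rw [Zsqrtd.norm_conj, gi_norm_pow, hnp]) hw, Or.inr hw⟩
  obtain ⟨u, hu, hcase⟩ := hmain
  have key : ((p ^ Z).re.natAbs = a ∧ (p ^ Z).im.natAbs = b) ∨
      ((p ^ Z).im.natAbs = a ∧ (p ^ Z).re.natAbs = b) := by
    rcases hcase with h | h <;> rcases gi_units u hu with rfl | rfl | rfl | rfl <;>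
      (rw [hwdef, Zsqrtd.ext_iff] at h
       simp [Zsqrtd.re_mul, Zsqrtd.im_mul, ← star_pow, Zsqrtd.re_star, Zsqrtd.im_star] at h
       omega)
  have hparity := gi_parity (m : ℤ) (by exact_mod_cast hm) Z
  rw [← hpdef] at hparity
  have hβp : β = GaussianInt.toComplex p := by
    rw [hβ, hpdef, GaussianInt.toComplex_def']; simp
  have hconj : (starRingEnd ℂ) β = GaussianInt.toComplex (star p) := by
    rw [hβp, GaussianInt.toComplex_star]
  set x := (p ^ Z).re with hx
  set y := (p ^ Z).im with hy
  have hsplit1 : p ^ Z + star (p ^ Z) = (⟨2 * x, 0⟩ : ℤ[i]) := by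
    rw [Zsqrtd.ext_iff, Zsqrtd.re_add, Zsqrtd.im_add, Zsqrtd.re_star, Zsqrtd.im_star]
    constructor
    · show x + x = 2 * x; ring
    · show y + -y = 0; ring
  have hsplit2 : p ^ Z - star (p ^ Z) = (⟨0, 2 * y⟩ : ℤ[i]) := by
    rw [Zsqrtd.ext_iff, Zsqrtd.re_sub, Zsqrtd.im_sub, Zsqrtd.re_star, Zsqrtd.im_star]
    constructor
    · show x - x = 0; ring
    · show y - -y = 2 * y; ring
  rcases Nat.even_or_odd Z with hZe | hZo
  · -- Z even
    have hyev : Even y := hparity.2.mpr hZe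
    have hab' : x.natAbs = a ∧ y.natAbs = b := by
      rcases key with h | ⟨h1, h2⟩
      · exact h
      · exfalso
        have hae : Even a := h1 ▸ Int.natAbs_even.mpr hyev
        rcases haodd with ⟨k, hk⟩; rcases hae with ⟨j, hj⟩; omega
    have hsum : β ^ Z + (-(starRingEnd ℂ β)) ^ Z = GaussianInt.toComplex ⟨2 * x, 0⟩ := by
      rw [hconj, hβp, Even.neg_pow hZe, ← map_pow, ← map_pow, ← star_pow, ← map_add, hsplit1]
    have hdiff : β ^ Z - (-(starRingEnd ℂ β)) ^ Z = GaussianInt.toComplex ⟨0, 2 * y⟩ := by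
      rw [hconj, hβp, Even.neg_pow hZe, ← map_pow, ← map_pow, ← star_pow, ← map_sub, hsplit2]
    constructor
    · rw [hsum, gi_abs_re]
      have h2 : (2 * x).natAbs = 2 * a := by omega
      rw [h2]; push_cast; ring
    · rw [hdiff, gi_abs_im]
      have h2 : (2 * y).natAbs = 2 * b := by omega
      rw [h2]; push_cast; ring
  · -- Z odd
    have hxev : Even x := hparity.1.mpr hZo
    have hab' : y.natAbs = a ∧ x.natAbs = b := by
      rcases key with ⟨h1, h2⟩ | h
      · exfalso
        have hae : Even a := h1 ▸ Int.natAbs_even.mpr hxev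
        rcases haodd with ⟨k, hk⟩; rcases hae with ⟨j, hj⟩; omega
      · exact h
    have hsum : β ^ Z + (-(starRingEnd ℂ β)) ^ Z = GaussianInt.toComplex ⟨0, 2 * y⟩ := by
      rw [hconj, hβp, Odd.neg_pow hZo, ← map_pow, ← map_pow, ← star_pow,
        show GaussianInt.toComplex (p ^ Z) + -GaussianInt.toComplex (star (p ^ Z)) =
          GaussianInt.toComplex (p ^ Z) - GaussianInt.toComplex (star (p ^ Z)) by ring,
        ← map_sub, hsplit2]
    have hdiff : β ^ Z - (-(starRingEnd ℂ β)) ^ Z = GaussianInt.toComplex ⟨2 * x, 0⟩ := by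
      rw [hconj, hβp, Odd.neg_pow hZo, ← map_pow, ← map_pow, ← star_pow,
        show GaussianInt.toComplex (p ^ Z) - -GaussianInt.toComplex (star (p ^ Z)) =
          GaussianInt.toComplex (p ^ Z) + GaussianInt.toComplex (star (p ^ Z)) by ring,
        ← map_add, hsplit1]
    constructor
    · rw [hsum, gi_abs_im]
      have h2 : (2 * y).natAbs = 2 * a := by omega
      rw [h2]; push_cast; ring
    · rw [hdiff, gi_abs_re]
      have h2 : (2 * x).natAbs = 2 * b := by omega
      rw [h2]; push_cast; ring
end

section
/- Let c be a prime of the form m^2 + 1 with m = 2^e, e ≥ 1, and β = m + i ∈ ℤ[i]. Suppose a odd, b even are coprime positive integers and X', Y', Z positive integers with a^{2X'} + b^{2Y'} = c^Z. Then Y'·ν_2(b) = e + ν_2(Z). -/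
open Zsqrtd

namespace Stmt14Aux

lemma irred_of_prime_norm (z : GaussianInt) (h : Nat.Prime z.norm.natAbs) :
    Irreducible z := by
  constructor
  · intro hu
    rw [← Zsqrtd.norm_eq_one_iff] at hu
    exact h.ne_one hu
  · intro s t hst
    have hn : z.norm.natAbs = s.norm.natAbs * t.norm.natAbs := by
      rw [hst, Zsqrtd.norm_mul, Int.natAbs_mul]
    rcases h.eq_one_or_self_of_dvd s.norm.natAbs ⟨_, hn⟩ with h1 | h1
    · exact Or.inl (Zsqrtd.norm_eq_one_iff.mp h1)
    · refine Or.inr (Zsqrtd.norm_eq_one_iff.mp ?_)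
      have hz : z.norm.natAbs ≠ 0 := h.pos.ne'
      rw [h1] at hn
      have h2 : z.norm.natAbs * 1 = z.norm.natAbs * t.norm.natAbs := by
        rw [mul_one]; exact hn
      exact (Nat.eq_of_mul_eq_mul_left h.pos h2).symm

lemma coords_odd (M : ℤ) (hM : Even M) (n : ℕ) (hn : Odd n) :
    (∃ r, ((⟨M, 1⟩ : GaussianInt) ^ n).re = M * r ∧ Odd r) ∧
      Odd ((⟨M, 1⟩ : GaussianInt) ^ n).im := by
  obtain ⟨j, rfl⟩ := hn
  induction j with
  | zero => exact ⟨⟨1, by simp, odd_one⟩, by simp⟩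
  | succ j ih =>
    obtain ⟨⟨r, hr, hro⟩, him⟩ := ih
    have hMo : Odd (M * M - 1) := (hM.mul_right M).sub_odd odd_one
    have hstep : (⟨M, 1⟩ : GaussianInt) ^ (2 * (j + 1) + 1) =
        (⟨M, 1⟩ : GaussianInt) ^ (2 * j + 1) * (⟨M, 1⟩ : GaussianInt) ^ 2 := by ring
    have hsqre : ((⟨M, 1⟩ : GaussianInt) ^ 2).re = M * M - 1 := by
      simp [pow_two, Zsqrtd.re_mul]; ring
    have hsqim : ((⟨M, 1⟩ : GaussianInt) ^ 2).im = 2 * M := by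
      simp [pow_two, Zsqrtd.im_mul]; ring
    constructor
    · refine ⟨r * (M * M - 1) - 2 * ((⟨M, 1⟩ : GaussianInt) ^ (2 * j + 1)).im, ?_, ?_⟩
      · rw [hstep, Zsqrtd.re_mul, hsqre, hsqim, hr]; ring
      · exact (hro.mul hMo).sub_even (even_two_mul _)
    · rw [hstep, Zsqrtd.im_mul, hsqre, hsqim, hr]
      have h2 : M * r * (2 * M) + ((⟨M, 1⟩ : GaussianInt) ^ (2 * j + 1)).im * (M * M - 1) =
          2 * (M * r * M) + ((⟨M, 1⟩ : GaussianInt) ^ (2 * j + 1)).im * (M * M - 1) := by ring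
      rw [h2]
      exact (even_two_mul _).add_odd (him.mul hMo)

lemma coords_even (M : ℤ) (hM : Even M) (k n : ℕ) (hk : 1 ≤ k) (hn : Odd n) :
    Odd ((⟨M, 1⟩ : GaussianInt) ^ (2 ^ k * n)).re ∧
      ∃ s, ((⟨M, 1⟩ : GaussianInt) ^ (2 ^ k * n)).im = 2 ^ k * M * s ∧ Odd s := by
  induction k, hk using Nat.le_induction with
  | base =>
    obtain ⟨⟨r, hr, hro⟩, him⟩ := coords_odd M hM n hn
    obtain ⟨B, hB⟩ : ∃ B, ((⟨M, 1⟩ : GaussianInt) ^ n).im = B := ⟨_, rfl⟩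
    rw [hB] at him
    have hpow : (⟨M, 1⟩ : GaussianInt) ^ (2 ^ 1 * n) = ((⟨M, 1⟩ : GaussianInt) ^ n) ^ 2 := by
      rw [← pow_mul, pow_one, Nat.mul_comm]
    constructor
    · rw [hpow, pow_two, Zsqrtd.re_mul, hr, hB]
      have h1 : M * r * (M * r) + (-1 : ℤ) * B * B = M * r * (M * r) - B * B := by ring
      rw [h1]
      exact ((hM.mul_right r).mul_right _).sub_odd (him.mul him)
    · refine ⟨r * B, ?_, hro.mul him⟩
      rw [hpow, pow_two, Zsqrtd.im_mul, hr, hB]; ring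
  | succ k hk ih =>
    obtain ⟨hre, s, hs, hso⟩ := ih
    obtain ⟨A, hA⟩ : ∃ A, ((⟨M, 1⟩ : GaussianInt) ^ (2 ^ k * n)).re = A := ⟨_, rfl⟩
    rw [hA] at hre
    have hpow : (⟨M, 1⟩ : GaussianInt) ^ (2 ^ (k + 1) * n) =
        ((⟨M, 1⟩ : GaussianInt) ^ (2 ^ k * n)) ^ 2 := by
      rw [← pow_mul, pow_succ]; ring_nf
    constructor
    · rw [hpow, pow_two, Zsqrtd.re_mul, hA, hs]
      have h1 : A * A + (-1 : ℤ) * (2 ^ k * M * s) * (2 ^ k * M * s) =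
          A * A - 2 ^ k * M * s * (2 ^ k * M * s) := by ring
      rw [h1]
      exact (hre.mul hre).sub_even (((hM.mul_left _).mul_right s).mul_right _)
    · refine ⟨A * s, ?_, hre.mul hso⟩
      rw [hpow, pow_two, Zsqrtd.im_mul, hA, hs]; ring

end Stmt14Aux

set_option maxHeartbeats 2000000 in
theorem stmt_14 (e : ℕ) (he : 1 ≤ e) (m c : ℕ) (hm : m = 2 ^ e)
    (hc : c = m ^ 2 + 1) (hcp : c.Prime)
    (a b : ℕ) (ha : 0 < a) (hb : 0 < b) (hab : Nat.Coprime a b)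
    (haodd : Odd a) (hbeven : Even b)
    (X' Y' Z : ℕ) (hX' : 0 < X') (hY' : 0 < Y') (hZ : 0 < Z)
    (heq : a ^ (2 * X') + b ^ (2 * Y') = c ^ Z) :
    Y' * padicValNat 2 b = e + padicValNat 2 Z := by
  obtain ⟨k, n, hn2, hZeq⟩ := Nat.exists_eq_pow_mul_and_not_dvd hZ.ne' 2 (by norm_num)
  have hn0 : n ≠ 0 := by rintro rfl; exact hn2 (dvd_zero 2)
  have hnodd : Odd n := Nat.odd_iff.mpr (by omega)
  have hkZ : padicValNat 2 Z = k := by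
    rw [hZeq, padicValNat.mul (pow_ne_zero _ two_ne_zero) hn0,
      padicValNat.prime_pow, padicValNat.eq_zero_of_not_dvd hn2, add_zero]
  set M : ℤ := 2 ^ e with hMdef
  have hMe : Even M := Int.even_pow.mpr ⟨even_two, by omega⟩
  set π : GaussianInt := ⟨M, 1⟩ with hπ
  set w : GaussianInt := ⟨(a : ℤ) ^ X', (b : ℤ) ^ Y'⟩ with hw
  have hcZ : ((a : ℤ)) ^ (2 * X') + ((b : ℤ)) ^ (2 * Y') = (c : ℤ) ^ Z := by
    exact_mod_cast congrArg (fun t : ℕ => (t : ℤ)) heq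
  have hnormπ : π.norm = (c : ℤ) := by
    simp only [Zsqrtd.norm, hπ, hc, hm]
    push_cast
    ring
  have hnormw : w.norm = (c : ℤ) ^ Z := by
    simp only [Zsqrtd.norm, hw]
    rw [← hcZ]
    ring
  have hcpos : (5 : ℕ) ≤ c := by
    have h2 : 2 ≤ m := by
      rw [hm]
      calc 2 = 2 ^ 1 := by norm_num
        _ ≤ 2 ^ e := Nat.pow_le_pow_right (by norm_num) he
    have : 2 * 2 ≤ m * m := Nat.mul_le_mul h2 h2
    rw [hc, pow_two]; omega
  have hprime : Prime π := by
    refine (Stmt14Aux.irred_of_prime_norm π ?_).prime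
    rw [hnormπ, Int.natAbs_natCast]
    exact hcp
  have hQ : w * star w = π ^ Z * star π ^ Z := by
    calc w * star w = ((w.norm : ℤ) : GaussianInt) := (Zsqrtd.norm_eq_mul_conj w).symm
      _ = (((c : ℤ) ^ Z : ℤ) : GaussianInt) := by rw [hnormw]
      _ = (((c : ℤ) : GaussianInt)) ^ Z := by push_cast; ring
      _ = (π * star π) ^ Z := by rw [← hnormπ, Zsqrtd.norm_eq_mul_conj]
      _ = π ^ Z * star π ^ Z := mul_pow _ _ _
  -- Bezout
  have hxy : IsCoprime ((a ^ X' : ℕ) : ℤ) ((b ^ Y' : ℕ) : ℤ) :=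
    Nat.isCoprime_iff_coprime.mpr (hab.pow X' Y')
  push_cast at hxy
  obtain ⟨u, v, huv⟩ := hxy
  have hno2 : ¬(π ∣ w ∧ π ∣ star w) := by
    rintro ⟨h1, h2⟩
    have hkey : (2 : GaussianInt) =
        (u : GaussianInt) * (w + star w) +
          (v : GaussianInt) * ((⟨0, -1⟩ : GaussianInt) * (w - star w)) := by
      ext
      · simp only [Zsqrtd.re_add, Zsqrtd.re_mul, Zsqrtd.im_mul, Zsqrtd.re_intCast,
          Zsqrtd.im_intCast, Zsqrtd.re_sub, Zsqrtd.im_sub, Zsqrtd.re_star, Zsqrtd.im_star, hw]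
        have : ((2 : GaussianInt)).re = 2 := rfl
        rw [this]
        nlinarith [huv]
      · simp only [Zsqrtd.im_add, Zsqrtd.re_mul, Zsqrtd.im_mul, Zsqrtd.re_intCast,
          Zsqrtd.im_intCast, Zsqrtd.re_sub, Zsqrtd.im_sub, Zsqrtd.re_star, Zsqrtd.im_star, hw]
        have : ((2 : GaussianInt)).im = 0 := rfl
        rw [this]
        ring
    have hdvd2 : π ∣ (2 : GaussianInt) := by
      rw [hkey]
      exact dvd_add ((dvd_add h1 h2).mul_left _) (((dvd_sub h1 h2).mul_left _).mul_left _)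
    obtain ⟨t, ht⟩ := hdvd2
    have hnt : (4 : ℤ) = (c : ℤ) * t.norm := by
      have := congrArg Zsqrtd.norm ht
      rw [Zsqrtd.norm_mul, hnormπ] at this
      simpa [Zsqrtd.norm] using this
    have : (c : ℤ) ∣ 4 := ⟨t.norm, hnt⟩
    have h4 : (c : ℤ) ≤ 4 := Int.le_of_dvd (by norm_num) this
    have : (5 : ℤ) ≤ (c : ℤ) := by exact_mod_cast hcpos
    omega
  -- get the power divisibility
  obtain ⟨vv, hvpow, hvim, hnormvv⟩ :
      ∃ v0 : GaussianInt, (π ^ Z ∣ v0) ∧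
        (v0.im = (b : ℤ) ^ Y' ∨ v0.im = -((b : ℤ) ^ Y')) ∧ v0.norm = (c : ℤ) ^ Z := by
    by_cases hdvd : π ∣ star w
    · have hnw : ¬π ∣ w := fun h => hno2 ⟨h, hdvd⟩
      refine ⟨star w, hprime.pow_dvd_of_dvd_mul_left Z hnw ⟨_, hQ⟩, Or.inr ?_,
        by rw [Zsqrtd.norm_conj, hnormw]⟩
      simp [hw]
    · exact ⟨w, hprime.pow_dvd_of_dvd_mul_right Z hdvd ⟨_, hQ⟩, Or.inl rfl, hnormw⟩
  obtain ⟨u0, hu0⟩ := hvpow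
  have hnpow : (π ^ Z).norm = (c : ℤ) ^ Z := by
    have h1 : (π ^ Z).norm = π.norm ^ Z :=
      map_pow (Zsqrtd.normMonoidHom) π Z
    rw [h1, hnormπ]
  have hnormu : u0.norm = 1 := by
    have h1 := congrArg Zsqrtd.norm hu0
    rw [Zsqrtd.norm_mul, hnpow, hnormvv] at h1
    have hc0 : ((c : ℤ)) ^ Z ≠ 0 := pow_ne_zero _ (by positivity)
    exact (mul_left_cancel₀ hc0 (by rw [← h1, mul_one])).symm
  have hsum : u0.re * u0.re + u0.im * u0.im = 1 := by
    have h1 := hnormu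
    simp only [Zsqrtd.norm] at h1
    linarith
  have hunit : (u0.im = 0 ∧ (u0.re = 1 ∨ u0.re = -1)) ∨
      (u0.re = 0 ∧ (u0.im = 1 ∨ u0.im = -1)) := by
    have h1 : -1 ≤ u0.re := by nlinarith [mul_self_nonneg u0.im]
    have h2 : u0.re ≤ 1 := by nlinarith [mul_self_nonneg u0.im]
    have h3 : -1 ≤ u0.im := by nlinarith [mul_self_nonneg u0.re]
    have h4 : u0.im ≤ 1 := by nlinarith [mul_self_nonneg u0.re]
    set R := u0.re with hR
    set I := u0.im with hI
    interval_cases R <;> interval_cases I <;> omega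
  have hvv : vv.im = (π ^ Z).re * u0.im + (π ^ Z).im * u0.re := by
    rw [hu0, Zsqrtd.im_mul]
  have hbeZ : Even ((b : ℤ)) := by exact_mod_cast hbeven
  have hvvE : Even vv.im := by
    rcases hvim with h | h <;> rw [h]
    · exact Int.even_pow.mpr ⟨hbeZ, hY'.ne'⟩
    · exact (Int.even_pow.mpr ⟨hbeZ, hY'.ne'⟩).neg
  obtain ⟨t, hto, hvt⟩ :
      ∃ t : ℤ, Odd t ∧ (vv.im = 2 ^ k * M * t ∨ vv.im = -(2 ^ k * M * t)) := by
    rcases Nat.eq_zero_or_pos k with hk0 | hk1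
    · subst hk0
      have hZn : Z = n := by simpa using hZeq
      obtain ⟨⟨r, hre, hro⟩, him⟩ := Stmt14Aux.coords_odd M hMe n hnodd
      rw [← hZn] at hre him
      rcases hunit with ⟨hI, hRe⟩ | ⟨hRe, hI⟩
      · exfalso
        rw [hvv, hI, mul_zero, zero_add] at hvvE
        have hodd : Odd ((π ^ Z).im * u0.re) := by
          rcases hRe with h | h <;> rw [h]
          · simpa using him
          · simpa using him.neg
        exact (Int.not_odd_iff_even.mpr hvvE) hodd
      · refine ⟨r, hro, ?_⟩
        rw [hvv, hRe, mul_zero, add_zero, hre]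
        rcases hI with h | h <;> rw [h]
        · left; ring
        · right; ring
    · obtain ⟨hre, s, hs, hso⟩ := Stmt14Aux.coords_even M hMe k n hk1 hnodd
      rw [← hZeq] at hre hs
      rcases hunit with ⟨hI, hRe⟩ | ⟨hRe, hI⟩
      · refine ⟨s, hso, ?_⟩
        rw [hvv, hI, mul_zero, zero_add, hs]
        rcases hRe with h | h <;> rw [h]
        · left; ring
        · right; ring
      · exfalso
        rw [hvv, hRe, mul_zero, add_zero] at hvvE
        have hodd : Odd ((π ^ Z).re * u0.im) := by
          rcases hI with h | h <;> rw [h]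
          · simpa using hre
          · simpa using hre.neg
        exact (Int.not_odd_iff_even.mpr hvvE) hodd
  -- extract the natural-number equation
  have hbE : (b : ℤ) ^ Y' = 2 ^ k * M * t ∨ (b : ℤ) ^ Y' = -(2 ^ k * M * t) := by
    rcases hvim with h | h <;> rcases hvt with h' | h' <;>
      first
        | exact Or.inl (by linarith)
        | exact Or.inr (by linarith)
  have hbYnat : b ^ Y' = 2 ^ (k + e) * t.natAbs := by
    have h1 : ((b : ℤ) ^ Y').natAbs = (2 ^ k * M * t).natAbs := by
      rcases hbE with h | h
      · rw [h]
      · rw [h, Int.natAbs_neg]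
    rw [Int.natAbs_pow, Int.natAbs_natCast, Int.natAbs_mul, Int.natAbs_mul, Int.natAbs_pow,
      hMdef, Int.natAbs_pow] at h1
    have h2 : (2 : ℤ).natAbs = 2 := rfl
    rw [h2] at h1
    rw [h1, pow_add]
  have ht0 : Odd t.natAbs := Int.natAbs_odd.mpr hto
  have htne : t.natAbs ≠ 0 := by
    rintro h
    rw [h] at ht0
    simp [Nat.odd_iff] at ht0
  have hval : padicValNat 2 (b ^ Y') = k + e := by
    rw [hbYnat, padicValNat.mul (pow_ne_zero _ two_ne_zero) htne, padicValNat.prime_pow,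
      padicValNat.eq_zero_of_not_dvd (by rw [Nat.odd_iff] at ht0; omega), add_zero]
  have hpowv : padicValNat 2 (b ^ Y') = Y' * padicValNat 2 b :=
    padicValNat.pow b Y'
  rw [hkZ]
  omega
end

section
/- Let c = m^2 + 1 be prime with m = 2^e, and β = m + i ∈ ℤ[i]. For any positive integer Z: if Z is even then Re(β^Z) ≡ ±2^{Z−1} (mod c), and if Z is odd then Im(β^Z) ≡ ±2^{Z−1} (mod c). Consequently, the extended multiplicative order modulo c of |Re(β^Z)| (for Z even) or |Im(β^Z)| (for Z odd), when coprime to c, equals 2e/gcd(2e, Z−1). -/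
-- e is a power of two
lemma aux_e_pow_two {e c : ℕ} (he : 1 ≤ e) (hc : c = 2 ^ (2 * e) + 1)
    (hcp : c.Prime) : ∃ v, e = 2 ^ v := by
  have he0 : e ≠ 0 := by omega
  obtain ⟨v, q, hq, hqodd⟩ : ∃ v q, 2 ^ v * q = e ∧ ¬ 2 ∣ q :=
    ⟨_, _, Nat.ordProj_mul_ordCompl_eq_self e 2,
      Nat.not_dvd_ordCompl Nat.prime_two he0⟩
  have hvpos : 0 < 2 ^ v := Nat.pow_pos (by norm_num)
  have hq1 : q = 1 := by
    by_contra hne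
    have hq0 : q ≠ 0 := by
      intro h; rw [h, mul_zero] at hq; omega
    have hq3 : 3 ≤ q := by omega
    set a : ℕ := 2 ^ (2 * 2 ^ v) with hadef
    have haq : a ^ q = 2 ^ (2 * e) := by
      rw [hadef, ← pow_mul]
      congr 1
      rw [← hq]; ring
    have hOq : Odd q := Nat.odd_iff.mpr (by omega)
    have hdvd : (a + 1) ∣ c := by
      have h1 : (a : ℤ) ≡ -1 [ZMOD ((a : ℤ) + 1)] := by
        rw [Int.modEq_iff_dvd]
        have : (-1 : ℤ) - a = -((a : ℤ) + 1) := by ring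
        rw [this]
        exact dvd_neg.mpr dvd_rfl
      have h2 := h1.pow q
      rw [hOq.neg_one_pow] at h2
      have h3 : ((a : ℤ) + 1) ∣ ((a : ℤ) ^ q + 1) := by
        have := h2.dvd
        have heq : (-1 : ℤ) - (a : ℤ) ^ q = -((a : ℤ) ^ q + 1) := by ring
        rw [heq] at this
        exact (dvd_neg.mp this)
      have h4 : ((a + 1 : ℕ) : ℤ) ∣ ((c : ℕ) : ℤ) := by
        push_cast
        rw [hc]
        have haq' : (a : ℤ) ^ q = 2 ^ (2 * e) := by exact_mod_cast haq
        push_cast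
        rw [← haq']
        exact h3
      exact_mod_cast h4
    rcases hcp.eq_one_or_self_of_dvd _ hdvd with h | h
    · have : 1 ≤ a := Nat.one_le_two_pow
      omega
    · rw [hc] at h
      have ha : a = 2 ^ (2 * e) := by omega
      have h5 : 2 * 2 ^ v = 2 * e := Nat.pow_right_injective (le_refl 2) ha
      have hev : 2 ^ v = e := by omega
      have : q = 1 := Nat.eq_of_mul_eq_mul_left hvpos (by rw [hq, mul_one, hev])
      exact hne this
  exact ⟨v, by rw [← hq, hq1, mul_one]⟩

-- order of 2 mod c is 4e
lemma aux_ord_two {e c : ℕ} (he : 1 ≤ e) (hc : c = 2 ^ (2 * e) + 1)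
    (hcp : c.Prime) : orderOf (2 : ZMod c) = 4 * e := by
  have h4 : (4 : ℕ) ≤ 2 ^ (2 * e) := by
    calc (4 : ℕ) = 2 ^ 2 := by norm_num
    _ ≤ 2 ^ (2 * e) := Nat.pow_le_pow_right (by norm_num) (by omega)
  haveI : Fact (2 < c) := ⟨by omega⟩
  have hneg : (-1 : ZMod c) ≠ 1 := ZMod.neg_one_ne_one
  have h2e : (2 : ZMod c) ^ (2 * e) = -1 := by
    have h0 : ((2 ^ (2 * e) + 1 : ℕ) : ZMod c) = 0 := by
      rw [← hc]; exact ZMod.natCast_self c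
    push_cast at h0
    exact eq_neg_of_add_eq_zero_left h0
  have h4e : (2 : ZMod c) ^ (4 * e) = 1 := by
    rw [show 4 * e = 2 * e * 2 by ring, pow_mul, h2e]
    norm_num
  have hd4 : orderOf (2 : ZMod c) ∣ 4 * e := orderOf_dvd_of_pow_eq_one h4e
  obtain ⟨v, hv⟩ := aux_e_pow_two he hc hcp
  have h4eq : 4 * e = 2 ^ (v + 2) := by
    rw [hv, pow_add]; ring
  have h2eq : 2 * e = 2 ^ (v + 1) := by
    rw [hv, pow_add]; ring
  rw [h4eq] at hd4
  obtain ⟨j, hj, hdj⟩ := (Nat.dvd_prime_pow Nat.prime_two).mp hd4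
  have hj2 : j = v + 2 := by
    by_contra hne
    have hj1 : j ≤ v + 1 := by omega
    have hdvd : orderOf (2 : ZMod c) ∣ 2 * e := by
      rw [hdj, h2eq]
      exact pow_dvd_pow 2 hj1
    have := orderOf_dvd_iff_pow_eq_one.mp hdvd
    rw [h2e] at this
    exact hneg this
  rw [hdj, hj2, h4eq]
lemma aux_least {e c : ℕ} (he : 1 ≤ e) (hc : c = 2 ^ (2 * e) + 1)
    (hcp : c.Prime) (A : ℤ) (w : ℕ)
    (hA : (A : ZMod c) = 2 ^ w ∨ (A : ZMod c) = -2 ^ w) :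
    IsLeast {n : ℕ | 0 < n ∧
      (((A.natAbs : ℤ)) ^ n ≡ 1 [ZMOD (c : ℤ)] ∨
       ((A.natAbs : ℤ)) ^ n ≡ -1 [ZMOD (c : ℤ)])}
      (2 * e / Nat.gcd (2 * e) w) := by
  haveI : Fact c.Prime := ⟨hcp⟩
  have hord := aux_ord_two he hc hcp
  set B : ZMod c := ((A.natAbs : ℤ) : ZMod c) with hBdef
  have hB : B = 2 ^ w ∨ B = -2 ^ w := by
    rcases Int.natAbs_eq A with h | h
    · rw [hBdef, ← h]; exact hA
    · have : ((A.natAbs : ℤ) : ZMod c) = -(A : ZMod c) := by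
        rw [show (A.natAbs : ℤ) = -A by omega]; push_cast; ring
      rw [hBdef, this]
      rcases hA with h' | h'
      · right; rw [h']
      · left; rw [h']; ring
  have hBB : B * B = 2 ^ (2 * w) := by
    have h2w : (2 : ZMod c) ^ w * 2 ^ w = 2 ^ (2 * w) := by
      rw [← pow_add, two_mul]
    rcases hB with h | h <;> rw [h]
    · exact h2w
    · rw [neg_mul_neg]; exact h2w
  have hcond : ∀ n : ℕ,
      ((((A.natAbs : ℤ)) ^ n ≡ 1 [ZMOD (c : ℤ)] ∨
        ((A.natAbs : ℤ)) ^ n ≡ -1 [ZMOD (c : ℤ)]) ↔ 2 * e ∣ w * n) := by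
    intro n
    have e1 : ((A.natAbs : ℤ)) ^ n ≡ 1 [ZMOD (c : ℤ)] ↔ B ^ n = 1 := by
      have := ZMod.intCast_eq_intCast_iff' ((A.natAbs : ℤ) ^ n) 1 c
      push_cast at this
      rw [← Int.natCast_natAbs] at this
      exact this.symm
    have e2 : ((A.natAbs : ℤ)) ^ n ≡ -1 [ZMOD (c : ℤ)] ↔ B ^ n = -1 := by
      have := ZMod.intCast_eq_intCast_iff' ((A.natAbs : ℤ) ^ n) (-1) c
      push_cast at this
      rw [← Int.natCast_natAbs] at this
      exact this.symm
    rw [e1, e2, ← mul_self_eq_one_iff, ← pow_add]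
    have key : B ^ (n + n) = 2 ^ (2 * w * n) := by
      rw [pow_add, ← mul_pow, hBB, ← pow_mul]
    rw [key, ← orderOf_dvd_iff_pow_eq_one, hord]
    rw [show 4 * e = 2 * (2 * e) by ring, show 2 * w * n = 2 * (w * n) by ring]
    exact Nat.mul_dvd_mul_iff_left (by norm_num : 0 < 2)
  have hgpos : 0 < Nat.gcd (2 * e) w := Nat.gcd_pos_of_pos_left w (by omega)
  constructor
  · refine ⟨Nat.div_pos (Nat.le_of_dvd (by omega) (Nat.gcd_dvd_left _ _)) hgpos,
      (hcond _).mpr ?_⟩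
    have h1 : w * (2 * e / Nat.gcd (2 * e) w)
        = 2 * e * (w / Nat.gcd (2 * e) w) := by
      rw [← Nat.mul_div_assoc w (Nat.gcd_dvd_left (2 * e) w),
        ← Nat.mul_div_assoc (2 * e) (Nat.gcd_dvd_right (2 * e) w), mul_comm]
    rw [h1]
    exact dvd_mul_right _ _
  · rintro n ⟨hn, hcn⟩
    have hdv : 2 * e ∣ w * n := (hcond n).mp hcn
    set g := Nat.gcd (2 * e) w with hg
    have hco := Nat.coprime_div_gcd_div_gcd hgpos
    have h2 : g * (2 * e / g) ∣ g * (w / g * n) := by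
      rwa [Nat.mul_div_cancel' (Nat.gcd_dvd_left _ _), ← mul_assoc,
        Nat.mul_div_cancel' (Nat.gcd_dvd_right _ _)]
    have h3 : 2 * e / g ∣ w / g * n := (Nat.mul_dvd_mul_iff_left hgpos).mp h2
    exact Nat.le_of_dvd hn (hco.dvd_of_dvd_mul_left h3)
lemma aux_comp {c m : ℕ} (hM2 : ((m : ZMod c)) ^ 2 = -1) :
    ∀ k : ℕ,
      ((((⟨(m : ℤ), 1⟩ : GaussianInt) ^ (k + 1)).re : ℤ) : ZMod c)
        = 2 ^ k * (m : ZMod c) ^ (k + 1)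
      ∧ ((((⟨(m : ℤ), 1⟩ : GaussianInt) ^ (k + 1)).im : ℤ) : ZMod c)
        = 2 ^ k * (m : ZMod c) ^ k := by
  intro k
  induction k with
  | zero => simp
  | succ k ih =>
    obtain ⟨ih1, ih2⟩ := ih
    constructor
    · have : ((⟨(m : ℤ), 1⟩ : GaussianInt) ^ (k + 2)).re
          = ((⟨(m : ℤ), 1⟩ : GaussianInt) ^ (k + 1)).re * (m : ℤ)
            - ((⟨(m : ℤ), 1⟩ : GaussianInt) ^ (k + 1)).im := by
        rw [pow_succ, Zsqrtd.re_mul]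
        ring
      rw [this]
      push_cast
      rw [ih1, ih2]
      linear_combination (-(2 ^ k * (m : ZMod c) ^ k)) * hM2
    · have : ((⟨(m : ℤ), 1⟩ : GaussianInt) ^ (k + 2)).im
          = ((⟨(m : ℤ), 1⟩ : GaussianInt) ^ (k + 1)).re
            + ((⟨(m : ℤ), 1⟩ : GaussianInt) ^ (k + 1)).im * (m : ℤ) := by
        rw [pow_succ, Zsqrtd.im_mul]
        ring
      rw [this]
      push_cast
      rw [ih1, ih2]
      ring

theorem stmt_15 (e : ℕ) (he : 1 ≤ e) (m c : ℕ) (hm : m = 2 ^ e)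
    (hc : c = m ^ 2 + 1) (hcp : c.Prime)
    (β : GaussianInt) (hβ : β = ⟨(m : ℤ), 1⟩)
    (Z : ℕ) (hZ : 0 < Z) :
    (Even Z →
      (((β ^ Z).re ≡ 2 ^ (Z - 1) [ZMOD (c : ℤ)] ∨
        (β ^ Z).re ≡ -(2 ^ (Z - 1)) [ZMOD (c : ℤ)]) ∧
       (IsCoprime ((β ^ Z).re) (c : ℤ) →
        IsLeast {n : ℕ | 0 < n ∧
          (((β ^ Z).re.natAbs : ℤ) ^ n ≡ 1 [ZMOD (c : ℤ)] ∨
           ((β ^ Z).re.natAbs : ℤ) ^ n ≡ -1 [ZMOD (c : ℤ)])}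
          (2 * e / Nat.gcd (2 * e) (Z - 1))))) ∧
    (Odd Z →
      (((β ^ Z).im ≡ 2 ^ (Z - 1) [ZMOD (c : ℤ)] ∨
        (β ^ Z).im ≡ -(2 ^ (Z - 1)) [ZMOD (c : ℤ)]) ∧
       (IsCoprime ((β ^ Z).im) (c : ℤ) →
        IsLeast {n : ℕ | 0 < n ∧
          (((β ^ Z).im.natAbs : ℤ) ^ n ≡ 1 [ZMOD (c : ℤ)] ∨
           ((β ^ Z).im.natAbs : ℤ) ^ n ≡ -1 [ZMOD (c : ℤ)])}
          (2 * e / Nat.gcd (2 * e) (Z - 1))))) := by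
  haveI : Fact c.Prime := ⟨hcp⟩
  have hc2 : c = 2 ^ (2 * e) + 1 := by rw [hc, hm, ← pow_mul, mul_comm]
  have hM2 : ((m : ZMod c)) ^ 2 = -1 := by
    have h0 : ((m ^ 2 + 1 : ℕ) : ZMod c) = 0 := by
      rw [← hc]; exact ZMod.natCast_self c
    push_cast at h0
    exact eq_neg_of_add_eq_zero_left h0
  obtain ⟨k, hk⟩ : ∃ k, Z = k + 1 := ⟨Z - 1, by omega⟩
  have hcomp := aux_comp (c := c) hM2 k
  subst hβ
  have hk1 : Z - 1 = k := by omega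
  have hre : ((((⟨(m : ℤ), 1⟩ : GaussianInt) ^ Z).re : ℤ) : ZMod c)
      = 2 ^ k * (m : ZMod c) ^ Z := by
    rw [hk]; exact hcomp.1
  have him : ((((⟨(m : ℤ), 1⟩ : GaussianInt) ^ Z).im : ℤ) : ZMod c)
      = 2 ^ k * (m : ZMod c) ^ k := by
    rw [hk]; exact hcomp.2
  constructor
  · intro hEven
    obtain ⟨t, ht⟩ := hEven
    have hMZ : (m : ZMod c) ^ Z = (-1 : ZMod c) ^ t := by
      rw [ht, show t + t = 2 * t by ring, pow_mul, hM2]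
    rw [hMZ] at hre
    have hA : ((((⟨(m : ℤ), 1⟩ : GaussianInt) ^ Z).re : ℤ) : ZMod c)
        = 2 ^ (Z - 1) ∨
        ((((⟨(m : ℤ), 1⟩ : GaussianInt) ^ Z).re : ℤ) : ZMod c)
        = -2 ^ (Z - 1) := by
      rcases neg_one_pow_eq_or (ZMod c) t with hpt | hpt
      · left; rw [hre, hpt, mul_one, hk1]
      · right; rw [hre, hpt, hk1]; ring
    constructor
    · rcases hA with h | h
      · left
        refine (ZMod.intCast_eq_intCast_iff' _ _ c).mp ?_
        push_cast
        exact h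
      · right
        refine (ZMod.intCast_eq_intCast_iff' _ _ c).mp ?_
        push_cast
        exact h
    · intro _
      exact aux_least he hc2 hcp _ (Z - 1) hA
  · intro hOdd
    have hkeven : ∃ t, k = t + t := by
      rcases hOdd with ⟨t, ht⟩
      exact ⟨t, by omega⟩
    obtain ⟨t, ht⟩ := hkeven
    have hMk : (m : ZMod c) ^ k = (-1 : ZMod c) ^ t := by
      rw [ht, show t + t = 2 * t by ring, pow_mul, hM2]
    rw [hMk] at him
    have hA : ((((⟨(m : ℤ), 1⟩ : GaussianInt) ^ Z).im : ℤ) : ZMod c)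
        = 2 ^ (Z - 1) ∨
        ((((⟨(m : ℤ), 1⟩ : GaussianInt) ^ Z).im : ℤ) : ZMod c)
        = -2 ^ (Z - 1) := by
      rcases neg_one_pow_eq_or (ZMod c) t with hpt | hpt
      · left; rw [him, hpt, mul_one, hk1]
      · right; rw [him, hpt, hk1]; ring
    constructor
    · rcases hA with h | h
      · left
        refine (ZMod.intCast_eq_intCast_iff' _ _ c).mp ?_
        push_cast
        exact h
      · right
        refine (ZMod.intCast_eq_intCast_iff' _ _ c).mp ?_
        push_cast
        exact h
    · intro _
      exact aux_least he hc2 hcp _ (Z - 1) hA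
end

section
/- Let u > v be coprime odd positive integers, c an odd prime, and suppose c^{Z/2} + b' = u^{2X'} and c^{Z/2} − b' = v^{2X'} for positive integers b', Z (Z even) and odd positive integer X'. Then 2·c^{Z/2} = (u^2 + v^2)·((u^{2X'} + v^{2X'})/(u^2 + v^2)), and every prime factor of u^{2X'} + v^{2X'} divides 2c. If moreover Zsigmondy's theorem forces X' = 1 whenever u^{2X'} + v^{2X'} has no prime factor outside those of u^2 + v^2, then X' = 1. -/
theorem stmt_16 (u v : ℕ) (huv : v < u) (hcop : Nat.Coprime u v)
    (hu : Odd u) (hv : Odd v) (hu0 : 0 < u) (hv0 : 0 < v)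
    (c : ℕ) (hc : c.Prime) (hcodd : Odd c)
    (b' Z : ℕ) (hb' : 0 < b') (hZ : 0 < Z) (hZeven : Even Z)
    (X' : ℕ) (hX' : 0 < X') (hX'odd : Odd X')
    (heq1 : c ^ (Z / 2) + b' = u ^ (2 * X'))
    (heq2 : c ^ (Z / 2) - b' = v ^ (2 * X')) :
    2 * c ^ (Z / 2) = (u ^ 2 + v ^ 2) * ((u ^ (2 * X') + v ^ (2 * X')) / (u ^ 2 + v ^ 2)) ∧
    (∀ p : ℕ, p.Prime → p ∣ u ^ (2 * X') + v ^ (2 * X') → p ∣ 2 * c) ∧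
    (((∀ p : ℕ, p.Prime → p ∣ u ^ (2 * X') + v ^ (2 * X') → p ∣ u ^ 2 + v ^ 2) → X' = 1)
      → X' = 1) := by
  have hvpos : 0 < v ^ (2 * X') := pow_pos hv0 _
  have hble : b' ≤ c ^ (Z / 2) := by
    by_contra h
    push_neg at h
    omega
  have hsum : u ^ (2 * X') + v ^ (2 * X') = 2 * c ^ (Z / 2) := by
    rw [← heq1, ← heq2]; omega
  have hdvd : u ^ 2 + v ^ 2 ∣ u ^ (2 * X') + v ^ (2 * X') := by
    have := hX'odd.nat_add_dvd_pow_add_pow (u ^ 2) (v ^ 2)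
    simpa [← pow_mul, mul_comm] using this
  have hk : 1 ≤ Z / 2 := by obtain ⟨w, hw⟩ := hZeven; omega
  -- u^2 + v^2 = 2 * m with m odd
  obtain ⟨a, ha⟩ := hu
  obtain ⟨b, hb⟩ := hv
  have hform : u ^ 2 + v ^ 2 = 2 * (2 * (a * a + a + b * b + b) + 1) := by
    subst ha hb; ring
  set m := 2 * (a * a + a + b * b + b) + 1 with hm
  have hmgt : 1 < m := by
    have : 3 ≤ u := by omega
    nlinarith [sq_nonneg v]
  have hmdvd : m ∣ c ^ (Z / 2) := by
    have h2m : 2 * m ∣ 2 * c ^ (Z / 2) := hform ▸ hsum ▸ hdvd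
    exact (mul_dvd_mul_iff_left (by norm_num : (2:ℕ) ≠ 0)).mp h2m
  have hcm : c ∣ m := by
    obtain ⟨q, hq, hqm⟩ := Nat.exists_prime_and_dvd (by omega : m ≠ 1)
    have : q ∣ c := hq.dvd_of_dvd_pow (hqm.trans hmdvd)
    rwa [(Nat.prime_dvd_prime_iff_eq hq hc).mp this] at hqm
  have hcd : c ∣ u ^ 2 + v ^ 2 := hform ▸ hcm.mul_left 2
  refine ⟨?_, ?_, ?_⟩
  · rw [Nat.mul_div_cancel' hdvd, hsum]
  · intro p hp hpd
    rw [hsum] at hpd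
    rcases (Nat.Prime.dvd_mul hp).mp hpd with h2 | hcp
    · exact h2.mul_right c
    · exact (hp.dvd_of_dvd_pow hcp).mul_left 2
  · intro h
    apply h
    intro p hp hpd
    rw [hsum] at hpd
    rcases (Nat.Prime.dvd_mul hp).mp hpd with h2 | hcp
    · exact h2.trans ⟨m, hform⟩
    · exact (hp.dvd_of_dvd_pow hcp).trans hcd
end

section
/- Let c be an odd prime such that c − 1 is a power of 2, and let a, b be integers coprime to c whose extended multiplicative orders modulo c are equal: e_c(a) = e_c(b) = E with E > 1. If (x,y,z) and (X,Y,Z) are two positive-integer solutions of a^x + b^y = c^z with Δ := |xY − Xy| ≠ 0 and z ≤ Z, then E divides Δ; moreover, if x ≢ X (mod 2) or y ≢ Y (mod 2), then Δ/E is odd. -/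
private lemma pow_delta_eq {F : Type*} [Field F] (A : F) (hA : A ≠ 0) (p q e1 e2 D : ℕ)
    (h : A ^ p * (-1) ^ e1 = A ^ q * (-1) ^ e2) (hc : D + q = p) :
    A ^ D = (-1) ^ (e1 + e2) := by
  have hs1 : (-1 : F) ^ e1 * (-1) ^ e1 = 1 := by
    rw [← pow_add]; exact Even.neg_one_pow ⟨e1, rfl⟩
  have hne : A ^ q * (-1 : F) ^ e1 ≠ 0 :=
    mul_ne_zero (pow_ne_zero _ hA) (pow_ne_zero _ (neg_ne_zero.mpr one_ne_zero))
  apply mul_right_cancel₀ hne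
  calc A ^ D * (A ^ q * (-1 : F) ^ e1) = A ^ (D + q) * (-1) ^ e1 := by rw [pow_add]; ring
    _ = A ^ p * (-1) ^ e1 := by rw [hc]
    _ = A ^ q * (-1) ^ e2 := h
    _ = (-1) ^ (e1 + e2) * (A ^ q * (-1) ^ e1) := by
        rw [pow_add]
        linear_combination (-(A ^ q * (-1 : F) ^ e2)) * hs1

private lemma order_aux (c : ℕ) (hcp : c.Prime)
    (ht : ∃ t : ℕ, c - 1 = 2 ^ t) (a : ℕ) (hac : Nat.Coprime a c)
    (E : ℕ) (hE1 : 1 < E)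
    (hEa : IsLeast {n : ℕ | 0 < n ∧
      ((a : ℤ) ^ n ≡ 1 [ZMOD (c : ℤ)] ∨ (a : ℤ) ^ n ≡ -1 [ZMOD (c : ℤ)])} E) :
    (∀ n : ℕ, ((a : ZMod c) ^ n = 1 ∨ (a : ZMod c) ^ n = -1) ↔ E ∣ n) ∧
      (a : ZMod c) ^ E = -1 := by
  haveI : Fact c.Prime := ⟨hcp⟩
  set A : ZMod c := (a : ZMod c) with hAdef
  have hA0 : A ≠ 0 := by
    rw [hAdef, ← ZMod.coe_unitOfCoprime a hac]
    exact Units.ne_zero _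
  have hAc1 : A ^ (c - 1) = 1 := ZMod.pow_card_sub_one_eq_one hA0
  -- translate the congruence set into ZMod statements
  have key : ∀ n : ℕ,
      ((a : ℤ) ^ n ≡ 1 [ZMOD (c : ℤ)] ∨ (a : ℤ) ^ n ≡ -1 [ZMOD (c : ℤ)]) ↔
        (A ^ n = 1 ∨ A ^ n = -1) := by
    intro n
    rw [← ZMod.intCast_eq_intCast_iff, ← ZMod.intCast_eq_intCast_iff]
    push_cast
    rfl
  set d : ℕ := orderOf (A ^ 2) with hddef
  have hfin : IsOfFinOrder (A ^ 2) := by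
    rw [isOfFinOrder_iff_pow_eq_one]
    refine ⟨c - 1, ?_, ?_⟩
    · have := hcp.two_le; omega
    · rw [← pow_mul, mul_comm, pow_mul, hAc1, one_pow]
  have hd0 : 0 < d := orderOf_pos_iff.mpr hfin
  have hiff : ∀ n : ℕ, (A ^ n = 1 ∨ A ^ n = -1) ↔ d ∣ n := by
    intro n
    rw [hddef, orderOf_dvd_iff_pow_eq_one, ← pow_mul, mul_comm, pow_mul]
    exact sq_eq_one_iff.symm
  have hEd : E = d := by
    have h1 : d ∣ E := (hiff E).mp ((key E).mp hEa.1.2)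
    have h2 : E ≤ d := hEa.2 ⟨hd0, (key d).mpr ((hiff d).mpr dvd_rfl)⟩
    exact le_antisymm h2 (Nat.le_of_dvd hEa.1.1 h1)
  refine ⟨fun n => (hiff n).trans (by rw [hEd]), ?_⟩
  -- now show A ^ E = -1
  rcases (key E).mp hEa.1.2 with h1 | h1
  · exfalso
    -- A ^ E = 1 leads to a contradiction
    obtain ⟨t, htt⟩ := ht
    have hoA : orderOf A ∣ 2 ^ t := htt ▸ orderOf_dvd_of_pow_eq_one hAc1
    obtain ⟨s, hst, hs⟩ := (Nat.dvd_prime_pow Nat.prime_two).mp hoA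
    have hoAE : orderOf A ∣ E := orderOf_dvd_of_pow_eq_one h1
    cases s with
    | zero =>
      have hA1 : A = 1 := orderOf_eq_one_iff.mp (by simpa using hs)
      have : E ≤ 1 := hEa.2 ⟨one_pos, (key 1).mpr (Or.inl (by simp [hA1]))⟩
      omega
    | succ s' =>
      have hsq : (A ^ 2 ^ s') ^ 2 = 1 := by
        rw [← pow_mul, ← pow_succ, ← hs, pow_orderOf_eq_one]
      have hmem : A ^ 2 ^ s' = 1 ∨ A ^ 2 ^ s' = -1 := sq_eq_one_iff.mp hsq
      have hle : E ≤ 2 ^ s' :=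
        hEa.2 ⟨by positivity, (key (2 ^ s')).mpr hmem⟩
      have : orderOf A ≤ E := Nat.le_of_dvd hEa.1.1 hoAE
      have h2s : (2:ℕ) ^ s' < 2 ^ (s' + 1) := by
        have h0 : (0:ℕ) < 2 ^ s' := by positivity
        rw [pow_succ]; omega
      omega
  · exact h1

theorem stmt_19 (c : ℕ) (hcp : c.Prime) (hcodd : Odd c)
    (ht : ∃ t : ℕ, c - 1 = 2 ^ t)
    (a b : ℕ) (ha : 1 < a) (hb : 1 < b)
    (hab : Nat.Coprime a b) (hac : Nat.Coprime a c) (hbc : Nat.Coprime b c)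
    (E : ℕ) (hE1 : 1 < E)
    (hEa : IsLeast {n : ℕ | 0 < n ∧
      ((a : ℤ) ^ n ≡ 1 [ZMOD (c : ℤ)] ∨ (a : ℤ) ^ n ≡ -1 [ZMOD (c : ℤ)])} E)
    (hEb : IsLeast {n : ℕ | 0 < n ∧
      ((b : ℤ) ^ n ≡ 1 [ZMOD (c : ℤ)] ∨ (b : ℤ) ^ n ≡ -1 [ZMOD (c : ℤ)])} E)
    (x y z X Y Z : ℕ) (hx : 0 < x) (hy : 0 < y) (hz : 0 < z)
    (hX : 0 < X) (hY : 0 < Y) (hZ : 0 < Z) (hzZ : z ≤ Z)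
    (heq1 : a ^ x + b ^ y = c ^ z) (heq2 : a ^ X + b ^ Y = c ^ Z)
    (Δ : ℕ) (hΔ : Δ = ((x : ℤ) * Y - (X : ℤ) * y).natAbs) (hΔ0 : Δ ≠ 0) :
    E ∣ Δ ∧ ((x % 2 ≠ X % 2 ∨ y % 2 ≠ Y % 2) → Odd (Δ / E)) := by
  haveI : Fact c.Prime := ⟨hcp⟩
  have hc2 : 2 < c := by
    have h2 := hcp.two_le
    rcases hcodd with ⟨m, hm⟩
    omega
  haveI : Fact (2 < c) := ⟨hc2⟩
  obtain ⟨haIff, haE⟩ := order_aux c hcp ht a hac E hE1 hEa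
  obtain ⟨hbIff, hbE⟩ := order_aux c hcp ht b hbc E hE1 hEb
  set A : ZMod c := (a : ZMod c) with hAdef
  set B : ZMod c := (b : ZMod c) with hBdef
  have hA0 : A ≠ 0 := by
    rw [hAdef, ← ZMod.coe_unitOfCoprime a hac]; exact Units.ne_zero _
  have hB0 : B ≠ 0 := by
    rw [hBdef, ← ZMod.coe_unitOfCoprime b hbc]; exact Units.ne_zero _
  -- cast the two equations to ZMod c
  have h1 : A ^ x = -B ^ y := by
    have h := congrArg (Nat.cast : ℕ → ZMod c) heq1
    push_cast at h
    rw [ZMod.natCast_self, zero_pow hz.ne'] at h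
    linear_combination h
  have h2 : A ^ X = -B ^ Y := by
    have h := congrArg (Nat.cast : ℕ → ZMod c) heq2
    push_cast at h
    rw [ZMod.natCast_self, zero_pow hZ.ne'] at h
    linear_combination h
  have hb1 : B ^ y = -A ^ x := by linear_combination h1
  have hb2 : B ^ Y = -A ^ X := by linear_combination h2
  -- the two key relations
  have hrelA : A ^ (x * Y) * (-1) ^ y = A ^ (X * y) * (-1) ^ Y := by
    have e1 : A ^ (x * Y) = (-1) ^ Y * B ^ (y * Y) := by
      rw [pow_mul, h1, neg_pow, ← pow_mul]
    have e2 : A ^ (X * y) = (-1) ^ y * B ^ (y * Y) := by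
      rw [pow_mul, h2, neg_pow, ← pow_mul, mul_comm Y y]
    rw [e1, e2]; ring
  have hrelB : B ^ (X * y) * (-1) ^ x = B ^ (x * Y) * (-1) ^ X := by
    have e1 : B ^ (X * y) = (-1) ^ X * A ^ (x * X) := by
      rw [mul_comm X y, pow_mul, hb1, neg_pow, ← pow_mul]
    have e2 : B ^ (x * Y) = (-1) ^ x * A ^ (x * X) := by
      rw [mul_comm x Y, pow_mul, hb2, neg_pow, ← pow_mul, mul_comm X x]
    rw [e1, e2]; ring
  -- case split from the definition of Δ
  have hcast : ((x * Y : ℕ) : ℤ) - ((X * y : ℕ) : ℤ) = (x : ℤ) * Y - (X : ℤ) * y := by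
    push_cast; ring
  rw [← hcast] at hΔ
  set P : ℕ := x * Y with hPdef
  set Q : ℕ := X * y with hQdef
  have hcases : Δ + Q = P ∨ Δ + P = Q := by omega
  have hADelta : A ^ Δ = (-1) ^ (y + Y) := by
    rcases hcases with hc1 | hc1
    · exact pow_delta_eq A hA0 P Q y Y Δ hrelA hc1
    · rw [add_comm y Y]
      exact pow_delta_eq A hA0 Q P Y y Δ hrelA.symm hc1
  have hBDelta : B ^ Δ = (-1) ^ (x + X) := by
    rcases hcases with hc1 | hc1
    · rw [add_comm x X]
      exact pow_delta_eq B hB0 P Q X x Δ hrelB.symm hc1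
    · exact pow_delta_eq B hB0 Q P x X Δ hrelB hc1
  -- divisibility
  have hdvd : E ∣ Δ := by
    refine (haIff Δ).mp ?_
    rcases neg_one_pow_eq_or (ZMod c) (y + Y) with h | h
    · exact Or.inl (hADelta.trans h)
    · exact Or.inr (hADelta.trans h)
  refine ⟨hdvd, ?_⟩
  set k : ℕ := Δ / E with hkdef
  have hDk : Δ = E * k := (Nat.mul_div_cancel' hdvd).symm
  have hkA : (-1 : ZMod c) ^ k = (-1) ^ (y + Y) := by
    rw [← hADelta, hDk, pow_mul, haE]
  have hkB : (-1 : ZMod c) ^ k = (-1) ^ (x + X) := by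
    rw [← hBDelta, hDk, pow_mul, hbE]
  have hne : (-1 : ZMod c) ≠ 1 := ZMod.neg_one_ne_one
  have hpar : ∀ m n : ℕ, (-1 : ZMod c) ^ m = (-1) ^ n → m % 2 = n % 2 := by
    intro m n h
    rcases Nat.even_or_odd m with hm | hm <;> rcases Nat.even_or_odd n with hn | hn
    · rw [Nat.even_iff] at hm hn; omega
    · exfalso
      rw [hm.neg_one_pow, hn.neg_one_pow] at h
      exact hne h.symm
    · exfalso
      rw [hm.neg_one_pow, hn.neg_one_pow] at h
      exact hne h
    · rw [Nat.odd_iff] at hm hn; omega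
  have hk1 := hpar k (y + Y) hkA
  have hk2 := hpar k (x + X) hkB
  intro hcase
  rw [Nat.odd_iff]
  rcases hcase with h | h <;> omega
end
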